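/- arXiv:1807.05328 — 5 statements merged into one kernel-verified Lean document; each statement's English description precedes it below -/
import Mathlib

section
/- Suppose each f_i : ℝ^d → ℝ (i = 1,…,n) is convex and Λ-smooth, and let w_* be a global minimizer of F(w) = (1/n) ∑_{i=1}^n f_i(w). Then for every w ∈ ℝ^d, (1/n) ∑_{i=1}^n ‖∇f_i(w) − ∇f_i(w_*)‖² ≤ 2Λ (F(w) − F(w_*)). -/
open scoped Matrix RealInnerProductSpace
open Finset

variable {E : Type*} [NormedAddCommGroup E] [InnerProductSpace ℝ E] [CompleteSpace E]

private lemma line_hasDerivAt (g : E → ℝ) (hg : Differentiable ℝ g) (x v : E) (t : ℝ) :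
    HasDerivAt (fun t : ℝ => g (x + t • v)) ⟪gradient g (x + t • v), v⟫ t := by
  have h1 : HasDerivAt (fun t : ℝ => x + t • v) v t := by
    simpa using ((hasDerivAt_id t).smul_const v).const_add x
  have h2 : HasFDerivAt g (InnerProductSpace.toDual ℝ E (gradient g (x + t • v))) (x + t • v) :=
    hasGradientAt_iff_hasFDerivAt.mp (hg (x + t • v)).hasGradientAt
  have h3 := h2.comp_hasDerivAt t h1
  simpa only [Function.comp_def, InnerProductSpace.toDual_apply_apply] using h3

private lemma convex_grad_ineq (g : E → ℝ) (hg : Differentiable ℝ g)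
    (hc : ConvexOn ℝ Set.univ g) (x y : E) :
    g x + ⟪gradient g x, y - x⟫ ≤ g y := by
  set v := y - x with hv
  have hxy : x + v = y := by rw [hv]; abel
  have hcomp : ConvexOn ℝ Set.univ (fun t : ℝ => g (x + t • v)) := by
    have h := hc.comp_affineMap (AffineMap.lineMap x (x + v) : ℝ →ᵃ[ℝ] E)
    have heq : (g ∘ (AffineMap.lineMap x (x + v) : ℝ →ᵃ[ℝ] E)) = fun t : ℝ => g (x + t • v) := by
      funext t
      simp only [Function.comp_apply, AffineMap.coe_lineMap, vsub_eq_sub, vadd_eq_add,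
        add_sub_cancel_left]
      rw [add_comm]
    rw [heq] at h
    simpa using h
  have hd := line_hasDerivAt g hg x v 0
  have hd0 : HasDerivAt (fun t : ℝ => g (x + t • v)) ⟪gradient g x, v⟫ 0 := by
    simpa using hd
  have hslope := hcomp.le_slope_of_hasDerivAt (Set.mem_univ (0:ℝ)) (Set.mem_univ 1) one_pos hd0
  rw [slope_def_field] at hslope
  simp only [one_smul, zero_smul, add_zero, hxy] at hslope
  norm_num at hslope
  rw [← toDual_gradient, InnerProductSpace.toDual_apply_apply] at hslope
  linarith

private lemma descent (g : E → ℝ) (hg : Differentiable ℝ g) {Λ : ℝ} (hΛ : 0 ≤ Λ)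
    (hL : ∀ a b : E, ‖gradient g b - gradient g a‖ ≤ Λ * ‖b - a‖) (x v : E) :
    g (x + v) ≤ g x + ⟪gradient g x, v⟫ + Λ / 2 * ‖v‖ ^ 2 := by
  set G : ℝ → ℝ := fun t => ⟪gradient g (x + t • v), v⟫ with hG
  have hasd : ∀ t : ℝ, HasDerivAt (fun t : ℝ => g (x + t • v)) (G t) t :=
    line_hasDerivAt g hg x v
  have hgradcont : Continuous fun t : ℝ => gradient g (x + t • v) := by
    have hlip : LipschitzWith (Real.toNNReal (Λ * ‖v‖)) (fun t : ℝ => gradient g (x + t • v)) := by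
      apply LipschitzWith.of_dist_le_mul
      intro s t
      rw [dist_eq_norm, dist_eq_norm]
      have h1 : ‖gradient g (x + s • v) - gradient g (x + t • v)‖
          ≤ Λ * ‖(x + s • v) - (x + t • v)‖ := hL _ _
      have h2 : ‖(x + s • v) - (x + t • v)‖ = ‖v‖ * ‖s - t‖ := by
        rw [add_sub_add_left_eq_sub, ← sub_smul, norm_smul, mul_comm]
      rw [Real.coe_toNNReal _ (by positivity)]
      calc ‖gradient g (x + s • v) - gradient g (x + t • v)‖
          ≤ Λ * (‖v‖ * ‖s - t‖) := by rw [← h2]; exact h1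
        _ = Λ * ‖v‖ * dist s t := by rw [Real.dist_eq, Real.norm_eq_abs]; ring
    exact hlip.continuous
  have hGcont : Continuous G := hgradcont.inner continuous_const
  have hint : IntervalIntegrable G MeasureTheory.volume 0 1 := hGcont.intervalIntegrable 0 1
  have hftc : ∫ t in (0:ℝ)..1, G t = g (x + v) - g x := by
    have h := intervalIntegral.integral_eq_sub_of_hasDerivAt
      (f := fun t : ℝ => g (x + t • v)) (f' := G)
      (fun t _ => hasd t) hint
    simpa using h
  have hbound : ∀ t ∈ Set.Icc (0:ℝ) 1, G t ≤ G 0 + Λ * ‖v‖ ^ 2 * t := by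
    intro t ht
    have h1 : G t - G 0 = ⟪gradient g (x + t • v) - gradient g (x + (0:ℝ) • v), v⟫ := by
      rw [inner_sub_left]
    have h2 : ⟪gradient g (x + t • v) - gradient g (x + (0:ℝ) • v), v⟫
        ≤ ‖gradient g (x + t • v) - gradient g (x + (0:ℝ) • v)‖ * ‖v‖ :=
      real_inner_le_norm _ _
    have h3 : ‖gradient g (x + t • v) - gradient g (x + (0:ℝ) • v)‖
        ≤ Λ * ‖(x + t • v) - (x + (0:ℝ) • v)‖ := hL _ _
    have h4 : ‖(x + t • v) - (x + (0:ℝ) • v)‖ = t * ‖v‖ := by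
      rw [add_sub_add_left_eq_sub, ← sub_smul, sub_zero, norm_smul, Real.norm_eq_abs,
        abs_of_nonneg ht.1]
    have h5 : G t - G 0 ≤ Λ * (t * ‖v‖) * ‖v‖ := by
      rw [h1]
      calc ⟪gradient g (x + t • v) - gradient g (x + (0:ℝ) • v), v⟫
          ≤ ‖gradient g (x + t • v) - gradient g (x + (0:ℝ) • v)‖ * ‖v‖ := h2
        _ ≤ (Λ * (t * ‖v‖)) * ‖v‖ := by
            apply mul_le_mul_of_nonneg_right _ (norm_nonneg v)
            rw [← h4]; exact h3
    nlinarith [h5]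
  have hintlin : IntervalIntegrable (fun t : ℝ => G 0 + Λ * ‖v‖ ^ 2 * t)
      MeasureTheory.volume 0 1 :=
    (continuous_const.add (continuous_const.mul continuous_id')).intervalIntegrable 0 1
  have hmono : ∫ t in (0:ℝ)..1, G t ≤ ∫ t in (0:ℝ)..1, (G 0 + Λ * ‖v‖ ^ 2 * t) := by
    apply intervalIntegral.integral_mono_on zero_le_one hint hintlin hbound
  have hval : ∫ t in (0:ℝ)..1, (G 0 + Λ * ‖v‖ ^ 2 * t) = G 0 + Λ * ‖v‖ ^ 2 / 2 := by
    rw [intervalIntegral.integral_add (f := fun _ : ℝ => G 0) (g := fun t : ℝ => Λ * ‖v‖ ^ 2 * t)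
      (intervalIntegrable_const)
      ((continuous_const.mul continuous_id').intervalIntegrable 0 1)]
    rw [intervalIntegral.integral_const_mul, integral_id]
    simp
    ring
  have hG0 : G 0 = ⟪gradient g x, v⟫ := by simp [hG]
  rw [hval, hG0] at hmono
  rw [hftc] at hmono
  linarith

private lemma cocoercive (g : E → ℝ) (hg : Differentiable ℝ g)
    (hc : ConvexOn ℝ Set.univ g) {Λ : ℝ} (hΛ : 0 < Λ)
    (hL : ∀ a b : E, ‖gradient g b - gradient g a‖ ≤ Λ * ‖b - a‖) (x y : E) :
    ‖gradient g y - gradient g x‖ ^ 2 ≤ 2 * Λ * (g y - g x - ⟪gradient g x, y - x⟫) := by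
  set Δ : E := gradient g y - gradient g x with hΔ
  set z : E := y + -(Λ⁻¹ • Δ) with hz
  have h1 := descent g hg hΛ.le hL y (-(Λ⁻¹ • Δ))
  have h2 := convex_grad_ineq g hg hc x z
  have e1 : ⟪gradient g y, -(Λ⁻¹ • Δ)⟫ = -(Λ⁻¹ * ⟪gradient g y, Δ⟫) := by
    rw [inner_neg_right, real_inner_smul_right]
  have e2 : ‖-(Λ⁻¹ • Δ)‖ ^ 2 = Λ⁻¹ ^ 2 * ‖Δ‖ ^ 2 := by
    rw [norm_neg, norm_smul, Real.norm_eq_abs, mul_pow, sq_abs]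
  have e3 : ⟪gradient g x, z - x⟫ = ⟪gradient g x, y - x⟫ - Λ⁻¹ * ⟪gradient g x, Δ⟫ := by
    have : z - x = (y - x) + -(Λ⁻¹ • Δ) := by rw [hz]; abel
    rw [this, inner_add_right, inner_neg_right, real_inner_smul_right]
    ring
  have e4 : ⟪gradient g y, Δ⟫ - ⟪gradient g x, Δ⟫ = ‖Δ‖ ^ 2 := by
    rw [← inner_sub_left, ← hΔ, real_inner_self_eq_norm_sq]
  rw [e1, e2] at h1
  rw [e3] at h2
  have e4' : Λ⁻¹ * ⟪gradient g y, Δ⟫ - Λ⁻¹ * ⟪gradient g x, Δ⟫ = Λ⁻¹ * ‖Δ‖ ^ 2 := by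
    rw [← mul_sub, e4]
  have hcomb : Λ⁻¹ * ‖Δ‖ ^ 2 - Λ / 2 * (Λ⁻¹ ^ 2 * ‖Δ‖ ^ 2)
      ≤ g y - g x - ⟪gradient g x, y - x⟫ := by linarith [h1, h2, e4']
  have hsimp : Λ⁻¹ * ‖Δ‖ ^ 2 - Λ / 2 * (Λ⁻¹ ^ 2 * ‖Δ‖ ^ 2) = ‖Δ‖ ^ 2 / (2 * Λ) := by
    field_simp
    ring
  rw [hsimp, div_le_iff₀ (by positivity : (0:ℝ) < 2 * Λ)] at hcomb
  linarith

theorem stmt2 (d n : ℕ) (hn : 1 ≤ n) (Λ : ℝ)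
    (f : Fin n → EuclideanSpace ℝ (Fin d) → ℝ)
    (hdiff : ∀ i, Differentiable ℝ (f i))
    (hconv : ∀ i, ConvexOn ℝ Set.univ (f i))
    (hsmooth : ∀ i, ∀ w w' : EuclideanSpace ℝ (Fin d),
      ‖gradient (f i) w' - gradient (f i) w‖ ≤ Λ * ‖w' - w‖)
    (F : EuclideanSpace ℝ (Fin d) → ℝ) (hF : ∀ w, F w = (n : ℝ)⁻¹ * ∑ i, f i w)
    (wstar : EuclideanSpace ℝ (Fin d)) (hmin : ∀ w, F wstar ≤ F w)
    (w : EuclideanSpace ℝ (Fin d)) :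
    (n : ℝ)⁻¹ * ∑ i, ‖gradient (f i) w - gradient (f i) wstar‖ ^ 2
      ≤ 2 * Λ * (F w - F wstar) := by
  have hn0 : (0:ℝ) < (n:ℝ) := by exact_mod_cast hn
  have hcn : (0:ℝ) < (n:ℝ)⁻¹ := by positivity
  -- gradient of F at wstar vanishes; sum of directional derivatives is zero
  have hFd : HasFDerivAt F ((n:ℝ)⁻¹ •
      ∑ i, (InnerProductSpace.toDual ℝ (EuclideanSpace ℝ (Fin d)) (gradient (f i) wstar))) wstar := by
    have hsum : HasFDerivAt (fun w => ∑ i, f i w)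
        (∑ i, (InnerProductSpace.toDual ℝ (EuclideanSpace ℝ (Fin d)) (gradient (f i) wstar)))
        wstar :=
      HasFDerivAt.fun_sum (fun i _ =>
        hasGradientAt_iff_hasFDerivAt.mp ((hdiff i) wstar).hasGradientAt)
    have h := hsum.const_mul ((n:ℝ)⁻¹)
    have hFeq : F = fun w => (n:ℝ)⁻¹ * ∑ i, f i w := funext hF
    rw [hFeq]
    exact h
  have hlocmin : IsLocalMin F wstar := Filter.Eventually.of_forall hmin
  have hzero : ((n:ℝ)⁻¹ •
      ∑ i, (InnerProductSpace.toDual ℝ (EuclideanSpace ℝ (Fin d)) (gradient (f i) wstar))) = 0 := by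
    rw [← hFd.fderiv]
    exact hlocmin.fderiv_eq_zero
  have hsum0 : ∀ v : EuclideanSpace ℝ (Fin d),
      ∑ i, ⟪gradient (f i) wstar, v⟫ = 0 := by
    intro v
    have h := congrArg (fun L : EuclideanSpace ℝ (Fin d) →L[ℝ] ℝ => L v) hzero
    simp only [ContinuousLinearMap.coe_smul', Pi.smul_apply, ContinuousLinearMap.coe_sum',
      Finset.sum_apply, InnerProductSpace.toDual_apply_apply, ContinuousLinearMap.zero_apply,
      smul_eq_mul] at h
    have := mul_eq_zero.mp h
    rcases this with h' | h'
    · exact absurd h' (ne_of_gt hcn)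
    · exact h'
  rcases le_or_gt Λ 0 with hΛ | hΛ
  · -- all gradients are constant; F w = F wstar
    have hgeq : ∀ i (u : EuclideanSpace ℝ (Fin d)), gradient (f i) u = gradient (f i) wstar := by
      intro i u
      have h := hsmooth i wstar u
      have h2 : ‖gradient (f i) u - gradient (f i) wstar‖ ≤ 0 := by
        have : Λ * ‖u - wstar‖ ≤ 0 := mul_nonpos_of_nonpos_of_nonneg hΛ (norm_nonneg _)
        linarith
      have h3 : gradient (f i) u - gradient (f i) wstar = 0 :=
        norm_le_zero_iff.mp h2
      exact sub_eq_zero.mp h3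
    have hFle : F w ≤ F wstar := by
      have hci : ∀ i, f i w + ⟪gradient (f i) wstar, wstar - w⟫ ≤ f i wstar := by
        intro i
        have := convex_grad_ineq (f i) (hdiff i) (hconv i) w wstar
        rwa [hgeq i w] at this
      have hsum := Finset.sum_le_sum (fun i (_ : i ∈ Finset.univ) => hci i)
      rw [Finset.sum_add_distrib, hsum0 (wstar - w)] at hsum
      rw [hF w, hF wstar]
      have := mul_le_mul_of_nonneg_left (by linarith [hsum] :
        (∑ i, f i w) ≤ ∑ i, f i wstar) hcn.le
      linarith
    have hFeq' : F w = F wstar := le_antisymm hFle (hmin w)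
    have hLHS : ∀ i, ‖gradient (f i) w - gradient (f i) wstar‖ ^ 2 = 0 := by
      intro i; rw [hgeq i w]; simp
    rw [hFeq']
    simp [hLHS]
  · -- main case
    have hkey : ∀ i, ‖gradient (f i) w - gradient (f i) wstar‖ ^ 2
        ≤ 2 * Λ * (f i w - f i wstar - ⟪gradient (f i) wstar, w - wstar⟫) := fun i =>
      cocoercive (f i) (hdiff i) (hconv i) hΛ (fun a b => hsmooth i a b) wstar w
    have hsum := Finset.sum_le_sum (fun i (_ : i ∈ Finset.univ) => hkey i)
    have hrhs : ∑ i, 2 * Λ * (f i w - f i wstar - ⟪gradient (f i) wstar, w - wstar⟫)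
        = 2 * Λ * ((∑ i, f i w) - ∑ i, f i wstar) := by
      rw [← Finset.mul_sum]
      congr 1
      rw [Finset.sum_sub_distrib, Finset.sum_sub_distrib, hsum0 (w - wstar)]
      ring
    rw [hrhs] at hsum
    have h := mul_le_mul_of_nonneg_left hsum hcn.le
    calc (n : ℝ)⁻¹ * ∑ i, ‖gradient (f i) w - gradient (f i) wstar‖ ^ 2
        ≤ (n:ℝ)⁻¹ * (2 * Λ * ((∑ i, f i w) - ∑ i, f i wstar)) := h
      _ = 2 * Λ * (F w - F wstar) := by rw [hF w, hF wstar]; ring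
end

section
/- Suppose each f_i : ℝ^d → ℝ (i = 1,…,n, n ≥ 2) is Λ-smooth, F(w) = (1/n) ∑_{i=1}^n f_i(w) is λ-strongly convex with global minimizer w_*, and 1 ≤ b ≤ n. Set κ = Λ/λ, β(b) = (n−b)/(b(n−1)), and N = (2/n) ∑_{i=1}^n ‖∇f_i(w_*)‖². Then for every w ∈ ℝ^d, the uniform average over all size-b subsets S of {1,…,n} satisfies E_S[‖∇F^S(w)‖²] ≤ 4 β(b) Λ κ (F(w) − F(w_*)) + 2‖∇F(w)‖² + N. -/
open scoped Matrix RealInnerProductSpace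
open Finset


lemma count_sup {α : Type*} [DecidableEq α] (s t : Finset α) (k : ℕ) (hts : t ⊆ s)
    (htk : t.card ≤ k) :
    ((Finset.powersetCard k s).filter (fun S => t ⊆ S)).card
      = (s.card - t.card).choose (k - t.card) := by
  rw [← Finset.card_sdiff_of_subset hts, ← Finset.card_powersetCard (k - t.card) (s \ t)]
  apply Finset.card_bij (fun S _ => S \ t)
  · intro S hS
    simp only [Finset.mem_filter, Finset.mem_powersetCard] at hS
    obtain ⟨⟨hSs, hSk⟩, htS⟩ := hS
    rw [Finset.mem_powersetCard]
    exact ⟨Finset.sdiff_subset_sdiff hSs (le_refl t), by rw [Finset.card_sdiff_of_subset htS, hSk]⟩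
  · intro S1 h1 S2 h2 heq
    simp only [Finset.mem_filter, Finset.mem_powersetCard] at h1 h2
    have e1 : S1 \ t ∪ t = S1 := Finset.sdiff_union_of_subset h1.2
    have e2 : S2 \ t ∪ t = S2 := Finset.sdiff_union_of_subset h2.2
    rw [← e1, ← e2, heq]
  · intro u hu
    rw [Finset.mem_powersetCard] at hu
    obtain ⟨hus, huc⟩ := hu
    have hdisj : Disjoint u t := Finset.disjoint_of_subset_left hus Finset.sdiff_disjoint
    refine ⟨u ∪ t, ?_, ?_⟩
    · simp only [Finset.mem_filter, Finset.mem_powersetCard]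
      refine ⟨⟨Finset.union_subset (hus.trans (Finset.sdiff_subset)) hts, ?_⟩,
        Finset.subset_union_right⟩
      rw [Finset.card_union_of_disjoint hdisj, huc, Nat.sub_add_cancel htk]
    · rw [Finset.union_sdiff_right, Finset.sdiff_eq_self_of_disjoint hdisj]

variable {E : Type*} [NormedAddCommGroup E] [InnerProductSpace ℝ E]

lemma expand_sum (n b : ℕ) (g : Fin n → E) :
    ∑ S ∈ powersetCard b (univ : Finset (Fin n)), ‖∑ i ∈ S, g i‖ ^ 2
      = ∑ i, ∑ j, ((((powersetCard b (univ : Finset (Fin n))).filter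
          (fun S => i ∈ S ∧ j ∈ S)).card : ℝ)) * ⟪g i, g j⟫ := by
  have step : ∀ S : Finset (Fin n), ‖∑ i ∈ S, g i‖ ^ 2
      = ∑ i : Fin n, ∑ j : Fin n, if i ∈ S ∧ j ∈ S then ⟪g i, g j⟫ else 0 := by
    intro S
    have h1 : ‖∑ i ∈ S, g i‖ ^ 2 = ∑ i ∈ S, ∑ j ∈ S, ⟪g i, g j⟫ := by
      rw [← real_inner_self_eq_norm_sq, sum_inner]
      exact Finset.sum_congr rfl fun i _ => inner_sum _ _ _
    rw [h1, show ∑ i ∈ S, ∑ j ∈ S, ⟪g i, g j⟫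
        = ∑ i : Fin n, if i ∈ S then ∑ j ∈ S, ⟪g i, g j⟫ else 0 from by
      rw [Finset.sum_ite_mem, univ_inter]]
    refine Finset.sum_congr rfl fun i _ => ?_
    by_cases hi : i ∈ S
    · simp only [hi, if_true, true_and]
      rw [Finset.sum_ite_mem, univ_inter]
    · simp [hi]
  rw [Finset.sum_congr rfl fun S _ => step S, Finset.sum_comm]
  refine Finset.sum_congr rfl fun i _ => ?_
  rw [Finset.sum_comm]
  refine Finset.sum_congr rfl fun j _ => ?_
  rw [← Finset.sum_filter, Finset.sum_const, nsmul_eq_mul]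

lemma cnt_diag (n b : ℕ) (hb1 : 1 ≤ b) (i : Fin n) :
    ((powersetCard b (univ : Finset (Fin n))).filter (fun S => i ∈ S ∧ i ∈ S)).card
      = (n - 1).choose (b - 1) := by
  have : ((powersetCard b (univ : Finset (Fin n))).filter (fun S => i ∈ S ∧ i ∈ S))
      = ((powersetCard b (univ : Finset (Fin n))).filter (fun S => ({i} : Finset (Fin n)) ⊆ S)) := by
    apply Finset.filter_congr
    intro S _
    simp [Finset.singleton_subset_iff]
  rw [this, count_sup _ _ _ (Finset.subset_univ _) (by simpa using hb1)]
  simp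

lemma cnt_off (n b : ℕ) (hb2 : 2 ≤ b) (i j : Fin n) (hij : i ≠ j) :
    ((powersetCard b (univ : Finset (Fin n))).filter (fun S => i ∈ S ∧ j ∈ S)).card
      = (n - 2).choose (b - 2) := by
  have hcard : ({i, j} : Finset (Fin n)).card = 2 := by
    rw [Finset.card_insert_of_notMem (by simpa using hij), Finset.card_singleton]
  have : ((powersetCard b (univ : Finset (Fin n))).filter (fun S => i ∈ S ∧ j ∈ S))
      = ((powersetCard b (univ : Finset (Fin n))).filter
          (fun S => ({i, j} : Finset (Fin n)) ⊆ S)) := by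
    apply Finset.filter_congr
    intro S _
    simp [Finset.insert_subset_iff, Finset.singleton_subset_iff]
  rw [this, count_sup _ _ _ (Finset.subset_univ _) (by rw [hcard]; exact hb2)]
  simp [hcard]

lemma cnt_off_one (n : ℕ) (i j : Fin n) (hij : i ≠ j) :
    ((powersetCard 1 (univ : Finset (Fin n))).filter (fun S => i ∈ S ∧ j ∈ S)).card = 0 := by
  rw [Finset.card_eq_zero]
  rw [Finset.filter_eq_empty_iff]
  intro S hS
  rw [Finset.mem_powersetCard] at hS
  rintro ⟨hi, hj⟩
  have hsub : ({i, j} : Finset (Fin n)) ⊆ S := by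
    simp [Finset.insert_subset_iff, Finset.singleton_subset_iff, hi, hj]
  have := Finset.card_le_card hsub
  rw [hS.2, Finset.card_insert_of_notMem (by simpa using hij), Finset.card_singleton] at this
  omega

lemma key_identity (n b : ℕ) (hn : 2 ≤ n) (hb1 : 1 ≤ b) (hbn : b ≤ n) (g : Fin n → E) :
    ∃ c1 m : ℕ,
      (c1 : ℝ) * n = (n.choose b : ℝ) * b ∧
      (m : ℝ) * ((n : ℝ) * ((n : ℝ) - 1)) = (n.choose b : ℝ) * ((b : ℝ) * ((b : ℝ) - 1)) ∧
      ∑ S ∈ powersetCard b (univ : Finset (Fin n)), ‖∑ i ∈ S, g i‖ ^ 2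
        = (c1 : ℝ) * (∑ i, ‖g i‖ ^ 2) + (m : ℝ) * (‖∑ i, g i‖ ^ 2 - ∑ i, ‖g i‖ ^ 2) := by
  classical
  set c1 : ℕ := (n - 1).choose (b - 1) with hc1def
  set m : ℕ := if b = 1 then 0 else (n - 2).choose (b - 2) with hmdef
  refine ⟨c1, m, ?_, ?_, ?_⟩
  · -- c1 * n = choose n b * b
    obtain ⟨a, rfl⟩ : ∃ a, n = a + 2 := ⟨n - 2, by omega⟩
    obtain ⟨c, rfl⟩ : ∃ c, b = c + 1 := ⟨b - 1, by omega⟩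
    have h1 : (a + 2) * (a + 1).choose c = (a + 2).choose (c + 1) * (c + 1) :=
      Nat.add_one_mul_choose_eq (a + 1) c
    have h1' : ((a + 2 : ℕ) : ℝ) * (((a + 1).choose c : ℕ) : ℝ)
        = (((a + 2).choose (c + 1) : ℕ) : ℝ) * ((c + 1 : ℕ) : ℝ) := by exact_mod_cast h1
    have hce : c1 = (a + 1).choose c := by simp [hc1def]
    rw [hce]
    push_cast at h1' ⊢
    linarith
  · -- m * (n (n-1)) = choose n b * b (b-1)
    by_cases hb : b = 1
    · subst hb
      simp [hmdef]
    · obtain ⟨a, rfl⟩ : ∃ a, n = a + 2 := ⟨n - 2, by omega⟩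
      obtain ⟨c, rfl⟩ : ∃ c, b = c + 2 := ⟨b - 2, by omega⟩
      have hme : m = a.choose c := by simp [hmdef]
      have h1 : (a + 1) * a.choose c = (a + 1).choose (c + 1) * (c + 1) :=
        Nat.add_one_mul_choose_eq a c
      have h2 : (a + 2) * (a + 1).choose (c + 1) = (a + 2).choose (c + 2) * (c + 2) :=
        Nat.add_one_mul_choose_eq (a + 1) (c + 1)
      have h1' : ((a + 1 : ℕ) : ℝ) * ((a.choose c : ℕ) : ℝ)
          = (((a + 1).choose (c + 1) : ℕ) : ℝ) * ((c + 1 : ℕ) : ℝ) := by exact_mod_cast h1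
      have h2' : ((a + 2 : ℕ) : ℝ) * (((a + 1).choose (c + 1) : ℕ) : ℝ)
          = (((a + 2).choose (c + 2) : ℕ) : ℝ) * ((c + 2 : ℕ) : ℝ) := by exact_mod_cast h2
      rw [hme]
      push_cast at h1' h2' ⊢
      nlinarith [h1', h2']
  · -- the identity
    have hdiag : ∀ i : Fin n,
        ((powersetCard b (univ : Finset (Fin n))).filter (fun S => i ∈ S ∧ i ∈ S)).card = c1 :=
      fun i => cnt_diag n b hb1 i
    have hoff : ∀ i j : Fin n, i ≠ j →
        ((powersetCard b (univ : Finset (Fin n))).filter (fun S => i ∈ S ∧ j ∈ S)).card = m := by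
      intro i j hij
      by_cases hb : b = 1
      · subst hb; rw [cnt_off_one n i j hij]; simp [hmdef]
      · rw [cnt_off n b (by omega) i j hij]; simp [hmdef, hb]
    rw [expand_sum n b g]
    have inner_split : ∀ i : Fin n,
        ∑ j, ((((powersetCard b (univ : Finset (Fin n))).filter
            (fun S => i ∈ S ∧ j ∈ S)).card : ℝ)) * ⟪g i, g j⟫
          = (c1 : ℝ) * ‖g i‖ ^ 2 + (m : ℝ) * (⟪g i, ∑ k, g k⟫ - ‖g i‖ ^ 2) := by
      intro i
      rw [← Finset.add_sum_erase _ _ (mem_univ i), hdiag i, real_inner_self_eq_norm_sq]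
      congr 1
      have herase : ∑ j ∈ univ.erase i, ⟪g i, g j⟫ = ⟪g i, ∑ k, g k⟫ - ‖g i‖ ^ 2 := by
        have h3 := Finset.add_sum_erase (univ : Finset (Fin n)) (fun j => ⟪g i, g j⟫) (mem_univ i)
        simp only [inner_sum] at h3 ⊢
        rw [← h3, real_inner_self_eq_norm_sq]
        ring
      rw [← herase, Finset.mul_sum]
      refine Finset.sum_congr rfl fun j hj => ?_
      rw [hoff i j (Finset.ne_of_mem_erase hj).symm]
    rw [Finset.sum_congr rfl fun i _ => inner_split i]
    rw [Finset.sum_add_distrib, ← Finset.mul_sum, ← Finset.mul_sum]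
    congr 1
    rw [Finset.sum_sub_distrib, ← sum_inner, real_inner_self_eq_norm_sq]

set_option maxHeartbeats 1000000 in
theorem stmt3 (d n b : ℕ) (hn : 2 ≤ n) (hb1 : 1 ≤ b) (hbn : b ≤ n)
    (Λ lam : ℝ) (hlam : 0 < lam)
    (f : Fin n → EuclideanSpace ℝ (Fin d) → ℝ)
    (hdiff : ∀ i, Differentiable ℝ (f i))
    (hsmooth : ∀ i, ∀ w w' : EuclideanSpace ℝ (Fin d),
      ‖gradient (f i) w' - gradient (f i) w‖ ≤ Λ * ‖w' - w‖)
    (F : EuclideanSpace ℝ (Fin d) → ℝ) (hF : ∀ w, F w = (n : ℝ)⁻¹ * ∑ i, f i w)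
    (hsc : ∀ w w' : EuclideanSpace ℝ (Fin d),
      F w' ≥ F w + ⟪gradient F w, w' - w⟫ + lam / 2 * ‖w' - w‖ ^ 2)
    (wstar : EuclideanSpace ℝ (Fin d)) (hmin : ∀ w, F wstar ≤ F w)
    (κ β N : ℝ) (hκ : κ = Λ / lam)
    (hβ : β = ((n : ℝ) - b) / (b * ((n : ℝ) - 1)))
    (hN : N = 2 / (n : ℝ) * ∑ i, ‖gradient (f i) wstar‖ ^ 2)
    (w : EuclideanSpace ℝ (Fin d)) :
    (∑ S ∈ Finset.powersetCard b (Finset.univ : Finset (Fin n)),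
        ‖(b : ℝ)⁻¹ • ∑ i ∈ S, gradient (f i) w‖ ^ 2) / (n.choose b : ℝ)
      ≤ 4 * β * Λ * κ * (F w - F wstar) + 2 * ‖gradient F w‖ ^ 2 + N := by
  have hnpos : (0:ℝ) < n := by
    have : 0 < n := by omega
    exact_mod_cast this
  have hbpos : (0:ℝ) < b := by exact_mod_cast hb1
  have hn1 : (0:ℝ) < (n:ℝ) - 1 := by
    have : (2:ℝ) ≤ n := by exact_mod_cast hn
    linarith
  have hbn' : (b:ℝ) ≤ n := by exact_mod_cast hbn
  have hCpos : (0:ℝ) < (n.choose b : ℝ) := by exact_mod_cast Nat.choose_pos hbn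
  -- gradient of F
  have hgradF : ∀ x, gradient F x = (n:ℝ)⁻¹ • ∑ i, gradient (f i) x := by
    intro x
    have hFi : ∀ i : Fin n, HasFDerivAt (f i)
        ((InnerProductSpace.toDual ℝ _) (gradient (f i) x)) x :=
      fun i => ((hdiff i) x).hasGradientAt.hasFDerivAt
    have hsum : HasFDerivAt (fun y => (n:ℝ)⁻¹ * ∑ i, f i y)
        ((n:ℝ)⁻¹ • ∑ i, (InnerProductSpace.toDual ℝ _) (gradient (f i) x)) x :=
      (HasFDerivAt.fun_sum fun i _ => hFi i).const_mul _
    have hFeq : F = fun y => (n:ℝ)⁻¹ * ∑ i, f i y := funext hF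
    have hg : HasGradientAt F ((n:ℝ)⁻¹ • ∑ i, gradient (f i) x) x := by
      rw [hasGradientAt_iff_hasFDerivAt, map_smul, map_sum, hFeq]
      exact hsum
    exact hg.gradient
  -- gradient vanishes at the minimizer
  have hstar : gradient F wstar = 0 := by
    have hloc : IsLocalMin F wstar := Filter.Eventually.of_forall hmin
    have h0 := hloc.fderiv_eq_zero
    simp [gradient, h0]
  -- strong convexity consequence
  have hΔ : 0 ≤ F w - F wstar := by linarith [hmin w]
  have hdist : lam / 2 * ‖w - wstar‖ ^ 2 ≤ F w - F wstar := by
    have h := hsc wstar w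
    rw [hstar] at h
    simp only [inner_zero_left] at h
    linarith
  -- per-component bound
  have hAi : ∀ i : Fin n, ‖gradient (f i) w‖ ^ 2
      ≤ 2 * Λ ^ 2 * ‖w - wstar‖ ^ 2 + 2 * ‖gradient (f i) wstar‖ ^ 2 := by
    intro i
    have h1 : ‖gradient (f i) w - gradient (f i) wstar‖ ≤ Λ * ‖w - wstar‖ := hsmooth i wstar w
    have h2 : ‖gradient (f i) w‖
        ≤ ‖gradient (f i) w - gradient (f i) wstar‖ + ‖gradient (f i) wstar‖ := by
      have := norm_add_le (gradient (f i) w - gradient (f i) wstar) (gradient (f i) wstar)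
      simpa using this
    have h1sq : ‖gradient (f i) w - gradient (f i) wstar‖ ^ 2 ≤ (Λ * ‖w - wstar‖) ^ 2 :=
      pow_le_pow_left₀ (norm_nonneg _) h1 2
    have h2sq : ‖gradient (f i) w‖ ^ 2
        ≤ (‖gradient (f i) w - gradient (f i) wstar‖ + ‖gradient (f i) wstar‖) ^ 2 :=
      pow_le_pow_left₀ (norm_nonneg _) h2 2
    nlinarith [h1sq, h2sq,
      sq_nonneg (‖gradient (f i) w - gradient (f i) wstar‖ - ‖gradient (f i) wstar‖)]
  have hN0 : 0 ≤ N := by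
    rw [hN]
    have : (0:ℝ) ≤ ∑ i, ‖gradient (f i) wstar‖ ^ 2 :=
      Finset.sum_nonneg fun i _ => by positivity
    positivity
  have hsumstar : 2 * ∑ i, ‖gradient (f i) wstar‖ ^ 2 = N * n := by
    rw [hN]; field_simp
  have hA : ∑ i, ‖gradient (f i) w‖ ^ 2
      ≤ (2 * Λ ^ 2 * ‖w - wstar‖ ^ 2 + N) * n := by
    have h1 : ∑ i, ‖gradient (f i) w‖ ^ 2
        ≤ ∑ i : Fin n, (2 * Λ ^ 2 * ‖w - wstar‖ ^ 2 + 2 * ‖gradient (f i) wstar‖ ^ 2) :=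
      Finset.sum_le_sum fun i _ => hAi i
    rw [Finset.sum_add_distrib, Finset.sum_const, Finset.card_univ, Fintype.card_fin,
      nsmul_eq_mul, ← Finset.mul_sum] at h1
    have h2 : (n:ℝ) * (2 * Λ ^ 2 * ‖w - wstar‖ ^ 2) + N * n
        = (2 * Λ ^ 2 * ‖w - wstar‖ ^ 2 + N) * n := by ring
    linarith [hsumstar]
  -- β bounds
  have hβ0 : 0 ≤ β := by
    rw [hβ]
    apply div_nonneg (by linarith) (by positivity)
  have hβ1 : β ≤ 1 := by
    have hb1' : (1:ℝ) ≤ b := by exact_mod_cast hb1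
    rw [hβ, div_le_one (by positivity)]
    nlinarith [mul_nonneg hnpos.le (sub_nonneg.mpr hb1')]
  -- combinatorial identity
  obtain ⟨c1, m, hc1, hm, hid⟩ := key_identity n b hn hb1 hbn (fun i => gradient (f i) w)
  have hGg : ‖∑ i, gradient (f i) w‖ ^ 2 = (n:ℝ) ^ 2 * ‖gradient F w‖ ^ 2 := by
    rw [hgradF w, norm_smul, mul_pow, norm_inv, Real.norm_natCast]
    field_simp
  rw [hGg] at hid
  have hc1' : (c1:ℝ) = (n.choose b : ℝ) * b / n := by
    rw [eq_div_iff hnpos.ne']; exact hc1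
  have hm' : (m:ℝ) = (n.choose b : ℝ) * ((b:ℝ) * ((b:ℝ) - 1)) / ((n:ℝ) * ((n:ℝ) - 1)) := by
    rw [eq_div_iff (by positivity)]; exact hm
  -- rewrite the LHS
  have hLHS : (∑ S ∈ Finset.powersetCard b (Finset.univ : Finset (Fin n)),
        ‖(b : ℝ)⁻¹ • ∑ i ∈ S, gradient (f i) w‖ ^ 2) / (n.choose b : ℝ)
      = β * ((∑ i, ‖gradient (f i) w‖ ^ 2) / n) + (1 - β) * ‖gradient F w‖ ^ 2 := by
    have hsmul : ∀ S : Finset (Fin n), ‖(b:ℝ)⁻¹ • ∑ i ∈ S, gradient (f i) w‖ ^ 2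
        = ((b:ℝ)⁻¹) ^ 2 * ‖∑ i ∈ S, gradient (f i) w‖ ^ 2 := by
      intro S
      rw [norm_smul, mul_pow, norm_inv, Real.norm_natCast]
    rw [Finset.sum_congr rfl fun S _ => hsmul S, ← Finset.mul_sum, hid, hβ, hc1', hm']
    field_simp
    ring
  rw [hLHS]
  -- final estimates
  have t1 : (∑ i, ‖gradient (f i) w‖ ^ 2) / n ≤ 2 * Λ ^ 2 * ‖w - wstar‖ ^ 2 + N := by
    rw [div_le_iff₀ hnpos]; exact hA
  have t2 : β * ((∑ i, ‖gradient (f i) w‖ ^ 2) / n)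
      ≤ β * (2 * Λ ^ 2 * ‖w - wstar‖ ^ 2 + N) := mul_le_mul_of_nonneg_left t1 hβ0
  have t4 : β * (2 * Λ ^ 2 * ‖w - wstar‖ ^ 2 + N)
      = 2 * (β * (Λ ^ 2 * ‖w - wstar‖ ^ 2)) + β * N := by ring
  have hDle : ‖w - wstar‖ ^ 2 ≤ 2 / lam * (F w - F wstar) := by
    rw [div_mul_eq_mul_div, le_div_iff₀ hlam]
    linarith [hdist]
  have t3 : Λ ^ 2 * ‖w - wstar‖ ^ 2 ≤ Λ ^ 2 * (2 / lam * (F w - F wstar)) :=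
    mul_le_mul_of_nonneg_left hDle (sq_nonneg Λ)
  have t5 : β * (Λ ^ 2 * ‖w - wstar‖ ^ 2) ≤ β * (Λ ^ 2 * (2 / lam * (F w - F wstar))) :=
    mul_le_mul_of_nonneg_left t3 hβ0
  have t6 : 2 * (β * (Λ ^ 2 * (2 / lam * (F w - F wstar)))) = 4 * β * Λ * κ * (F w - F wstar) := by
    rw [hκ]; field_simp; ring
  have t7 : β * N ≤ N := by nlinarith
  have t8 : (1 - β) * ‖gradient F w‖ ^ 2 ≤ 2 * ‖gradient F w‖ ^ 2 := by
    nlinarith [sq_nonneg ‖gradient F w‖]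
  linarith
end

section
/- Let 𝓗 be a real symmetric positive definite d×d matrix, and let s, y ∈ ℝ^d with s ≠ 0 and yᵀ s > 0. Define the BFGS update 𝓗' = 𝓗 − (𝓗 s sᵀ 𝓗)/(sᵀ 𝓗 s) + (y yᵀ)/(yᵀ s). Then det(𝓗') = det(𝓗) · (yᵀ s)/(sᵀ 𝓗 s). -/
open scoped Matrix RealInnerProductSpace
open Finset

noncomputable def bfgsUpdate {d : ℕ} (H : Matrix (Fin d) (Fin d) ℝ) (s y : Fin d → ℝ) :
    Matrix (Fin d) (Fin d) ℝ :=
  H - (s ⬝ᵥ H.mulVec s)⁻¹ • Matrix.vecMulVec (H.mulVec s) (Matrix.vecMul s H)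
    + (y ⬝ᵥ s)⁻¹ • Matrix.vecMulVec y y

theorem stmt9 (d : ℕ) (H : Matrix (Fin d) (Fin d) ℝ) (hsym : H.IsSymm) (hpd : H.PosDef)
    (s y : Fin d → ℝ) (hs : s ≠ 0) (hys : 0 < y ⬝ᵥ s) :
    (bfgsUpdate H s y).det = H.det * (y ⬝ᵥ s) / (s ⬝ᵥ H.mulVec s) := by
  have ha_pos : 0 < s ⬝ᵥ H.mulVec s := by
    have := hpd.dotProduct_mulVec_pos hs
    simpa using this
  set a := s ⬝ᵥ H.mulVec s with ha
  set b := y ⬝ᵥ s with hb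
  have ha0 : a ≠ 0 := ha_pos.ne'
  have hb0 : b ≠ 0 := hys.ne'
  have hdet : IsUnit H.det := hpd.det_pos.ne'.isUnit
  have hHinv : H * H⁻¹ = 1 := Matrix.mul_nonsing_inv _ hdet
  have hinvH : H⁻¹ * H = 1 := Matrix.nonsing_inv_mul _ hdet
  set U : Matrix (Fin d) (Fin 2) ℝ :=
    Matrix.of (fun i j => ![-(a⁻¹) * H.mulVec s i, b⁻¹ * y i] j) with hU
  set V : Matrix (Fin 2) (Fin d) ℝ :=
    Matrix.of (fun j k => ![Matrix.vecMul s H k, y k] j) with hV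
  have hUV : bfgsUpdate H s y = H + U * V := by
    ext i k
    simp only [bfgsUpdate, Matrix.mul_apply, Fin.sum_univ_two, Matrix.vecMulVec_apply,
      Matrix.sub_apply, Matrix.add_apply, Matrix.smul_apply, hU, hV, Matrix.of_apply,
      Matrix.cons_val_zero, Matrix.cons_val_one, Matrix.head_cons, smul_eq_mul]
    ring
  have key : bfgsUpdate H s y = H * (1 + (H⁻¹ * U) * V) := by
    rw [hUV, Matrix.mul_add, Matrix.mul_one, ← Matrix.mul_assoc, ← Matrix.mul_assoc,
      hHinv, Matrix.one_mul]
  rw [key, Matrix.det_mul, Matrix.det_one_add_mul_comm]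
  have h1 : Matrix.vecMul (Matrix.vecMul s H) H⁻¹ = s := by
    rw [Matrix.vecMul_vecMul, hHinv, Matrix.vecMul_one]
  have h2 : Matrix.vecMul y H⁻¹ ⬝ᵥ H.mulVec s = b := by
    rw [Matrix.dotProduct_mulVec, Matrix.vecMul_vecMul, hinvH, Matrix.vecMul_one]
  have hW : V * H⁻¹ = Matrix.of (fun j k => ![s k, Matrix.vecMul y H⁻¹ k] j) := by
    ext p k
    fin_cases p
    · have := congrFun h1 k
      simpa [Matrix.mul_apply, Matrix.vecMul, dotProduct, hV] using this
    · simp [Matrix.mul_apply, Matrix.vecMul, dotProduct, hV]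
  have hVHU : V * (H⁻¹ * U) = !![(-1 : ℝ), 1; -(b * a⁻¹), b⁻¹ * (Matrix.vecMul y H⁻¹ ⬝ᵥ y)] := by
    rw [← Matrix.mul_assoc, hW]
    have factor : ∀ (c : ℝ) (v w : Fin d → ℝ), (∑ x, v x * (c * w x)) = c * (v ⬝ᵥ w) := by
      intro c v w
      rw [dotProduct, Finset.mul_sum]
      exact Finset.sum_congr rfl fun _ _ => by ring
    ext p q
    fin_cases p <;> fin_cases q <;>
      simp only [Matrix.mul_apply, hU, Matrix.of_apply, Matrix.cons_val_zero,
        Matrix.cons_val_one, Matrix.head_cons, Matrix.cons_val', Matrix.empty_val',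
        Matrix.cons_val_fin_one, Fin.isValue, Fin.zero_eta, Fin.mk_one,
        Matrix.vecHead, Matrix.vecTail] <;>
      rw [factor]
    · rw [← ha]; field_simp
    · rw [dotProduct_comm, ← hb]; field_simp
    · rw [h2]; ring
  rw [hVHU]
  rw [Matrix.det_fin_two]
  simp [Matrix.one_apply]
  field_simp
end

section
/- Fix d, m ≥ 1 and constants 0 < σ ≤ Σ and 0 < λ̂ ≤ Λ̂. Let 𝓗^(0) be a real symmetric d×d matrix with Σ^{-1} I ⪯ 𝓗^(0) ⪯ σ^{-1} I, and let (s_j, y_j) ∈ ℝ^d × ℝ^d for j = 1,…,m be pairs with s_j ≠ 0 and y_j = B_j s_j for real symmetric matrices B_j satisfying λ̂ I ⪯ B_j ⪯ Λ̂ I. Define the BFGS recursion 𝓗^(j) = 𝓗^(j−1) − (𝓗^(j−1) s_j s_jᵀ 𝓗^(j−1))/(s_jᵀ 𝓗^(j−1) s_j) + (y_j y_jᵀ)/(y_jᵀ s_j). Then each 𝓗^(j) is well defined (symmetric positive definite), and there exist constants 0 < μ₁ ≤ μ₂ depending only on d, m, σ, Σ, λ̂, Λ̂ (and not on the particular pairs)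 such that the inverse H = (𝓗^(m))^{-1} satisfies μ₁ I ⪯ H ⪯ μ₂ I. -/
open scoped Matrix RealInnerProductSpace
open Finset

open Matrix

namespace BFGSAux
variable {d : ℕ}


variable {d : ℕ}

lemma dot_self_nonneg (v : Fin d → ℝ) : 0 ≤ v ⬝ᵥ v :=
  Finset.sum_nonneg fun _ _ => mul_self_nonneg _

lemma dot_self_pos {v : Fin d → ℝ} (hv : v ≠ 0) : 0 < v ⬝ᵥ v := by
  rcases (dot_self_nonneg v).lt_or_eq with h | h
  · exact h
  · exfalso; apply hv
    ext i
    by_contra hvi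
    have h1 : 0 < v i * v i := mul_self_pos.2 (by simpa using hvi)
    have : (0:ℝ) < v ⬝ᵥ v :=
      Finset.sum_pos' (fun j _ => mul_self_nonneg _) ⟨i, Finset.mem_univ i, h1⟩
    linarith [h ▸ this]

lemma dot_cs (u v : Fin d → ℝ) : (u ⬝ᵥ v)^2 ≤ (u ⬝ᵥ u) * (v ⬝ᵥ v) := by
  have := Finset.sum_mul_sq_le_sq_mul_sq Finset.univ u v
  simpa [dotProduct, sq] using this

noncomputable def nrm (v : Fin d → ℝ) : ℝ := Real.sqrt (v ⬝ᵥ v)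

lemma nrm_nonneg (v : Fin d → ℝ) : 0 ≤ nrm v := Real.sqrt_nonneg _

lemma nrm_sq (v : Fin d → ℝ) : nrm v ^ 2 = v ⬝ᵥ v := Real.sq_sqrt (dot_self_nonneg v)

lemma abs_dot_le (u v : Fin d → ℝ) : |u ⬝ᵥ v| ≤ nrm u * nrm v := by
  refine abs_le_of_sq_le_sq ?_ (mul_nonneg (nrm_nonneg u) (nrm_nonneg v))
  rw [mul_pow, nrm_sq, nrm_sq]; exact dot_cs u v

lemma nrm_add_le (u v : Fin d → ℝ) : nrm (u + v) ≤ nrm u + nrm v := by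
  refine le_of_sq_le_sq ?_ (add_nonneg (nrm_nonneg u) (nrm_nonneg v))
  have h1 : (u + v) ⬝ᵥ (u + v) = u ⬝ᵥ u + 2 * (u ⬝ᵥ v) + v ⬝ᵥ v := by
    rw [dotProduct_add, add_dotProduct, add_dotProduct, dotProduct_comm v u]; ring
  have h2 := (abs_dot_le u v).trans_eq rfl
  have h3 := le_abs_self (u ⬝ᵥ v)
  rw [nrm_sq, h1]
  have := nrm_sq u; have := nrm_sq v
  nlinarith [nrm_nonneg u, nrm_nonneg v]

lemma nrm_smul (c : ℝ) (v : Fin d → ℝ) : nrm (c • v) = |c| * nrm v := by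
  unfold nrm
  have : (c • v) ⬝ᵥ (c • v) = c^2 * (v ⬝ᵥ v) := by
    rw [smul_dotProduct, dotProduct_smul, smul_eq_mul, smul_eq_mul]; ring
  rw [this, Real.sqrt_mul (sq_nonneg c), Real.sqrt_sq_eq_abs]

lemma sub_add_cancel' (x : Fin d → ℝ) (c : ℝ) (s : Fin d → ℝ) : (x - c • s) + c • s = x := by
  abel

/-- symmetry swap for quadratic cross terms -/
lemma dot_mulVec_comm {A : Matrix (Fin d) (Fin d) ℝ} (hA : A.IsSymm) (u v : Fin d → ℝ) :
    u ⬝ᵥ A *ᵥ v = v ⬝ᵥ A *ᵥ u := by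
  rw [dotProduct_mulVec, ← Matrix.mulVec_transpose, hA.eq, dotProduct_comm]

lemma vecMul_eq_of_symm {A : Matrix (Fin d) (Fin d) ℝ} (hA : A.IsSymm) (s : Fin d → ℝ) :
    Matrix.vecMul s A = A *ᵥ s := by
  rw [← hA.eq, Matrix.vecMul_transpose, hA.eq]

lemma vecMulVec_mulVec (u v x : Fin d → ℝ) :
    (Matrix.vecMulVec u v) *ᵥ x = (v ⬝ᵥ x) • u := by
  ext i
  simp only [Matrix.mulVec, Matrix.vecMulVec_apply, dotProduct, Pi.smul_apply,
    smul_eq_mul]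
  rw [Finset.sum_mul]
  congr 1; ext j; ring

lemma vecMulVec_self_transpose (u : Fin d → ℝ) :
    (Matrix.vecMulVec u u)ᵀ = Matrix.vecMulVec u u := by
  ext i j
  simp [Matrix.vecMulVec_apply, mul_comm]

lemma qf_update {H : Matrix (Fin d) (Fin d) ℝ} (hH : H.IsSymm) (s y x : Fin d → ℝ) :
    x ⬝ᵥ (bfgsUpdate H s y) *ᵥ x
      = x ⬝ᵥ H *ᵥ x - ((H *ᵥ s) ⬝ᵥ x)^2 / (s ⬝ᵥ H *ᵥ s) + (y ⬝ᵥ x)^2 / (y ⬝ᵥ s) := by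
  simp only [bfgsUpdate, vecMul_eq_of_symm hH, Matrix.add_mulVec, Matrix.sub_mulVec,
    Matrix.smul_mulVec, vecMulVec_mulVec, dotProduct_add, dotProduct_sub,
    dotProduct_smul, smul_eq_mul]
  rw [dotProduct_comm x (H *ᵥ s), dotProduct_comm x y]
  ring

lemma update_symm {H : Matrix (Fin d) (Fin d) ℝ} (hH : H.IsSymm) (s y : Fin d → ℝ) :
    (bfgsUpdate H s y).IsSymm := by
  unfold bfgsUpdate
  rw [vecMul_eq_of_symm hH]
  unfold Matrix.IsSymm
  rw [Matrix.transpose_add, Matrix.transpose_sub, Matrix.transpose_smul, Matrix.transpose_smul,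
    vecMulVec_self_transpose, vecMulVec_self_transpose, hH.eq]

set_option maxHeartbeats 2000000 in
lemma scalar_step {α lam Lam S P c a E X : ℝ}
    (hα : 0 < α) (hlam : 0 < lam) (hll : lam ≤ Lam) (hS : 0 < S) (hP : 0 ≤ P)
    (ha1 : lam * S^2 ≤ a) (ha2 : a ≤ Lam * S^2)
    (hE : |E| ≤ Lam * S * P) (hX : 0 ≤ X) (hXle : X ≤ P + |c| * S) :
    min (α * (min 1 (lam^2/(4*Lam^2)) / 4)) (lam^2/(12*Lam)) * X^2
      ≤ α * P^2 + (c*a + E)^2 / a := by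
  have hLam : 0 < Lam := lt_of_lt_of_le hlam hll
  have ha : 0 < a := lt_of_lt_of_le (by positivity) ha1
  obtain ⟨q, hqdef⟩ : ∃ t : ℝ, t = |c| * S := ⟨_, rfl⟩
  obtain ⟨m1, hm1def⟩ : ∃ t : ℝ, t = min 1 (lam^2/(4*Lam^2)) := ⟨_, rfl⟩
  rw [← hqdef] at hXle
  rw [show min 1 (lam^2/(4*Lam^2)) = m1 from hm1def.symm]
  have hq : 0 ≤ q := by rw [hqdef]; positivity
  have hm1 : (0:ℝ) < m1 := by rw [hm1def]; exact lt_min one_pos (by positivity)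
  have hm1a : m1 ≤ 1 := by rw [hm1def]; exact min_le_left _ _
  have hm1b : m1 ≤ lam^2/(4*Lam^2) := by rw [hm1def]; exact min_le_right _ _
  have hXq : X^2 ≤ (P + q)^2 := by nlinarith
  by_cases hcase : lam * q ≤ 2 * Lam * P
  · -- P is large; min * X² ≤ α*(m1/4)*X² ≤ α P²
    have key : α * (m1 / 4) * X^2 ≤ α * P^2 := by
      have h1 : m1 * q^2 ≤ (lam^2/(4*Lam^2)) * q^2 := by nlinarith
      have h2 : (lam^2/(4*Lam^2)) * q^2 ≤ P^2 := by
        rw [div_mul_eq_mul_div, div_le_iff₀ (by positivity)]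
        nlinarith [mul_le_mul hcase hcase (by positivity : (0:ℝ) ≤ lam*q)
          (by positivity : (0:ℝ) ≤ 2*Lam*P)]
      have h3 : m1 * X^2 ≤ m1 * (P+q)^2 := mul_le_mul_of_nonneg_left hXq hm1.le
      have h4 : m1 * (P+q)^2 ≤ 2 * (m1 * P^2 + m1 * q^2) := by
        nlinarith [mul_nonneg hm1.le (sq_nonneg (P - q))]
      have h5 : m1 * X^2 ≤ 4 * P^2 := by
        nlinarith [mul_le_mul_of_nonneg_right hm1a (sq_nonneg P)]
      have h6 : (α/4) * (m1*X^2) ≤ (α/4) * (4*P^2) :=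
        mul_le_mul_of_nonneg_left h5 (by positivity)
      linarith [h6]
    have hrest : 0 ≤ (c*a + E)^2 / a := by positivity
    calc min (α * (m1 / 4)) (lam^2/(12*Lam)) * X^2
        ≤ α * (m1 / 4) * X^2 :=
          mul_le_mul_of_nonneg_right (min_le_left _ _) (sq_nonneg X)
      _ ≤ α * P^2 := key
      _ ≤ α * P^2 + (c*a + E)^2 / a := by linarith
  · -- q dominant
    push_neg at hcase
    have hPq : 2 * Lam * P < lam * q := hcase
    have hq0 : 0 < q := by nlinarith
    have hca : lam * q * S ≤ |c| * a := by
      calc lam * q * S = |c| * (lam * S^2) := by rw [hqdef]; ring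
        _ ≤ |c| * a := by nlinarith [abs_nonneg c]
    have hE2 : |E| < lam * q * S / 2 := by
      calc |E| ≤ Lam * S * P := hE
        _ < lam * q * S / 2 := by nlinarith
    have habs : lam * q * S / 2 ≤ |c*a + E| := by
      have h5 : |c*a| = |c| * a := by rw [abs_mul, abs_of_pos ha]
      have h6 : |c*a| ≤ |c*a + E| + |E| := by
        calc |c*a| = |(c*a + E) + (-E)| := by ring_nf
          _ ≤ |c*a + E| + |(-E)| := abs_add_le _ _
          _ = |c*a + E| + |E| := by rw [abs_neg]
      linarith
    have hsq : (lam * q * S / 2)^2 ≤ (c*a + E)^2 := by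
      have h := pow_le_pow_left₀ (by positivity : (0:ℝ) ≤ lam * q * S / 2) habs 2
      rwa [sq_abs] at h
    have hdiv : (lam * q * S / 2)^2 / (Lam * S^2) ≤ (c*a + E)^2 / a :=
      div_le_div₀ (sq_nonneg _) hsq ha ha2
    have heq : (lam * q * S / 2)^2 / (Lam * S^2) = lam^2 * q^2 / (4 * Lam) := by
      field_simp
      ring
    have hX3 : X ≤ 3 * q / 2 := by
      have : P ≤ q / 2 := by nlinarith
      linarith
    have hfin : (lam^2/(12*Lam)) * X^2 ≤ lam^2 * q^2 / (4 * Lam) := by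
      have hX2 : X^2 ≤ 9 * q^2 / 4 := by nlinarith
      rw [div_mul_eq_mul_div, div_le_div_iff₀ (by positivity) (by positivity)]
      have h8 := mul_le_mul_of_nonneg_left hX2 (by positivity : (0:ℝ) ≤ lam^2 * (4*Lam))
      have h9 : (0:ℝ) ≤ lam^2 * Lam * q^2 := by positivity
      linarith [h8, h9]
    calc min (α * (m1 / 4)) (lam^2/(12*Lam)) * X^2
        ≤ (lam^2/(12*Lam)) * X^2 :=
          mul_le_mul_of_nonneg_right (min_le_right _ _) (sq_nonneg X)
      _ ≤ lam^2 * q^2 / (4 * Lam) := hfin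
      _ = (lam * q * S / 2)^2 / (Lam * S^2) := heq.symm
      _ ≤ (c*a + E)^2 / a := hdiv
      _ ≤ α * P^2 + (c*a + E)^2 / a := by nlinarith


lemma nrm_pos {v : Fin d → ℝ} (hv : v ≠ 0) : 0 < nrm v :=
  Real.sqrt_pos.2 (dot_self_pos hv)

lemma proj_identity {H : Matrix (Fin d) (Fin d) ℝ} (hH : H.IsSymm) (s x : Fin d → ℝ) (c : ℝ) :
    (x - c • s) ⬝ᵥ H *ᵥ (x - c • s)
      = x ⬝ᵥ H *ᵥ x - 2*c*((H *ᵥ s) ⬝ᵥ x) + c^2 * (s ⬝ᵥ H *ᵥ s) := by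
  have hsx : s ⬝ᵥ H *ᵥ x = (H *ᵥ s) ⬝ᵥ x := by
    rw [dot_mulVec_comm hH s x, dotProduct_comm]
  have hxs : x ⬝ᵥ H *ᵥ s = (H *ᵥ s) ⬝ᵥ x := dotProduct_comm _ _
  rw [Matrix.mulVec_sub, Matrix.mulVec_smul, sub_dotProduct, smul_dotProduct,
    dotProduct_sub, dotProduct_sub, dotProduct_smul, dotProduct_smul, smul_eq_mul,
    smul_eq_mul, smul_eq_mul, hsx, hxs]
  ring

def GoodQF (α M : ℝ) (A : Matrix (Fin d) (Fin d) ℝ) : Prop :=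
  A.IsSymm ∧ (∀ x, α * (x ⬝ᵥ x) ≤ x ⬝ᵥ A *ᵥ x) ∧ (∀ x, x ⬝ᵥ A *ᵥ x ≤ M * (x ⬝ᵥ x))

lemma good_step {H : Matrix (Fin d) (Fin d) ℝ} {s y : Fin d → ℝ} {α M lam Lam : ℝ}
    (hα : 0 < α) (hlam : 0 < lam) (hll : lam ≤ Lam)
    (hG : GoodQF α M H) (hs : s ≠ 0)
    (ha1 : lam * (s ⬝ᵥ s) ≤ y ⬝ᵥ s) (ha2 : y ⬝ᵥ s ≤ Lam * (s ⬝ᵥ s))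
    (hyy : y ⬝ᵥ y ≤ Lam * (y ⬝ᵥ s)) :
    GoodQF (min (α * (min 1 (lam^2/(4*Lam^2)) / 4)) (lam^2/(12*Lam))) (M + Lam)
      (bfgsUpdate H s y) := by
  obtain ⟨hsymm, hlow, hup⟩ := hG
  have hLam : 0 < Lam := hlam.trans_le hll
  have hss : 0 < s ⬝ᵥ s := dot_self_pos hs
  have ha : 0 < y ⬝ᵥ s := lt_of_lt_of_le (by positivity) ha1
  have hb : 0 < s ⬝ᵥ H *ᵥ s := lt_of_lt_of_le (mul_pos hα hss) (hlow s)
  refine ⟨update_symm hsymm s y, ?_, ?_⟩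
  · intro x
    rw [qf_update hsymm]
    obtain ⟨c, hc⟩ : ∃ t : ℝ, t = ((H *ᵥ s) ⬝ᵥ x) / (s ⬝ᵥ H *ᵥ s) := ⟨_, rfl⟩
    have e1 : (x - c • s) ⬝ᵥ H *ᵥ (x - c • s)
        = x ⬝ᵥ H *ᵥ x - ((H *ᵥ s) ⬝ᵥ x)^2 / (s ⬝ᵥ H *ᵥ s) := by
      rw [proj_identity hsymm, hc]
      field_simp
      ring
    have e2 : y ⬝ᵥ x = c * (y ⬝ᵥ s) + y ⬝ᵥ (x - c • s) := by
      rw [dotProduct_sub, dotProduct_smul, smul_eq_mul]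
      ring
    have hNy : nrm y ≤ Lam * nrm s := by
      have h1 : y ⬝ᵥ y ≤ (Lam * nrm s)^2 := by
        have h0 := mul_le_mul_of_nonneg_left ha2 hLam.le
        rw [mul_pow, nrm_sq]
        nlinarith [h0]
      calc nrm y = Real.sqrt (y ⬝ᵥ y) := rfl
        _ ≤ Real.sqrt ((Lam * nrm s)^2) := Real.sqrt_le_sqrt h1
        _ = Lam * nrm s := Real.sqrt_sq (mul_nonneg hLam.le (nrm_nonneg s))
    have hE : |y ⬝ᵥ (x - c • s)| ≤ Lam * nrm s * nrm (x - c • s) :=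
      (abs_dot_le y _).trans (mul_le_mul_of_nonneg_right hNy (nrm_nonneg _))
    have hXle : nrm x ≤ nrm (x - c • s) + |c| * nrm s := by
      calc nrm x = nrm ((x - c • s) + c • s) := by
            congr 1
            abel
        _ ≤ nrm (x - c • s) + nrm (c • s) := nrm_add_le _ _
        _ = nrm (x - c • s) + |c| * nrm s := by rw [nrm_smul]
    have hkey := scalar_step (α := α) (lam := lam) (Lam := Lam) (S := nrm s)
      (P := nrm (x - c • s)) (c := c) (a := y ⬝ᵥ s) (E := y ⬝ᵥ (x - c • s)) (X := nrm x)
      hα hlam hll (nrm_pos hs) (nrm_nonneg _)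
      (by rw [nrm_sq]; exact ha1) (by rw [nrm_sq]; exact ha2)
      hE (nrm_nonneg x) hXle
    rw [nrm_sq, nrm_sq] at hkey
    have hql : α * ((x - c • s) ⬝ᵥ (x - c • s)) ≤ (x - c • s) ⬝ᵥ H *ᵥ (x - c • s) := hlow _
    rw [e1] at hql
    rw [← e2] at hkey
    linarith
  · intro x
    rw [qf_update hsymm]
    have h1 : x ⬝ᵥ H *ᵥ x ≤ M * (x ⬝ᵥ x) := hup x
    have h2 : (y ⬝ᵥ x)^2 ≤ Lam * (y ⬝ᵥ s) * (x ⬝ᵥ x) := by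
      have := dot_cs y x
      nlinarith [dot_self_nonneg x]
    have h3 : (y ⬝ᵥ x)^2 / (y ⬝ᵥ s) ≤ Lam * (x ⬝ᵥ x) := by
      rw [div_le_iff₀ ha]
      nlinarith
    have h4 : 0 ≤ ((H *ᵥ s) ⬝ᵥ x)^2 / (s ⬝ᵥ H *ᵥ s) := div_nonneg (sq_nonneg _) hb.le
    linarith

lemma psd_cs {A : Matrix (Fin d) (Fin d) ℝ} (hA : A.IsSymm) (hpsd : ∀ v, 0 ≤ v ⬝ᵥ A *ᵥ v)
    (u w : Fin d → ℝ) : (u ⬝ᵥ A *ᵥ w)^2 ≤ (u ⬝ᵥ A *ᵥ u) * (w ⬝ᵥ A *ᵥ w) := by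
  have key : ∀ t : ℝ, 0 ≤ u ⬝ᵥ A *ᵥ u + 2*t*(u ⬝ᵥ A *ᵥ w) + t^2*(w ⬝ᵥ A *ᵥ w) := by
    intro t
    have h := hpsd (u + t • w)
    have hwu : w ⬝ᵥ A *ᵥ u = u ⬝ᵥ A *ᵥ w := dot_mulVec_comm hA w u
    have e : (u + t • w) ⬝ᵥ A *ᵥ (u + t • w)
        = u ⬝ᵥ A *ᵥ u + 2*t*(u ⬝ᵥ A *ᵥ w) + t^2*(w ⬝ᵥ A *ᵥ w) := by
      rw [Matrix.mulVec_add, Matrix.mulVec_smul, add_dotProduct, smul_dotProduct,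
        dotProduct_add, dotProduct_add, dotProduct_smul, dotProduct_smul, smul_eq_mul,
        smul_eq_mul, smul_eq_mul, hwu]
      ring
    rw [e] at h
    exact h
  rcases eq_or_lt_of_le (hpsd w) with hw | hw
  · by_cases hβ : u ⬝ᵥ A *ᵥ w = 0
    · rw [hβ, ← hw]
      simp
    · exfalso
      have hk := key (-(u ⬝ᵥ A *ᵥ u + 1)/(2*(u ⬝ᵥ A *ᵥ w)))
      rw [← hw] at hk
      have he : 2 * (-(u ⬝ᵥ A *ᵥ u + 1)/(2*(u ⬝ᵥ A *ᵥ w))) * (u ⬝ᵥ A *ᵥ w)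
          = -(u ⬝ᵥ A *ᵥ u + 1) := by
        field_simp
      rw [he] at hk
      linarith [hk]
  · have hk := key (-(u ⬝ᵥ A *ᵥ w)/(w ⬝ᵥ A *ᵥ w))
    have he : 2 * (-(u ⬝ᵥ A *ᵥ w)/(w ⬝ᵥ A *ᵥ w)) * (u ⬝ᵥ A *ᵥ w)
        + (-(u ⬝ᵥ A *ᵥ w)/(w ⬝ᵥ A *ᵥ w))^2 * (w ⬝ᵥ A *ᵥ w)
        = -((u ⬝ᵥ A *ᵥ w)^2/(w ⬝ᵥ A *ᵥ w)) := by
      field_simp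
      ring
    have h3 : 0 ≤ u ⬝ᵥ A *ᵥ u - (u ⬝ᵥ A *ᵥ w)^2/(w ⬝ᵥ A *ᵥ w) := by linarith [hk, he]
    rw [sub_nonneg] at h3
    rw [div_le_iff₀ hw] at h3
    linarith

lemma isSymm_isHermitian {A : Matrix (Fin d) (Fin d) ℝ} (hA : A.IsSymm) : A.IsHermitian := by
  rw [Matrix.IsHermitian, Matrix.conjTranspose_eq_transpose_of_trivial]
  exact hA

lemma goodQF_posDef {A : Matrix (Fin d) (Fin d) ℝ} {α M : ℝ} (hα : 0 < α)
    (hG : GoodQF α M A) : A.PosDef := by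
  refine Matrix.PosDef.of_dotProduct_mulVec_pos (isSymm_isHermitian hG.1) fun x hx => ?_
  have h1 := hG.2.1 x
  have h2 := dot_self_pos hx
  have : 0 < x ⬝ᵥ A *ᵥ x := lt_of_lt_of_le (mul_pos hα h2) h1
  simpa [star_trivial] using this

lemma good_inv {A : Matrix (Fin d) (Fin d) ℝ} {α M : ℝ} (hα : 0 < α) (hM : 0 < M)
    (hG : GoodQF α M A) :
    (A⁻¹ - M⁻¹ • (1 : Matrix (Fin d) (Fin d) ℝ)).PosSemidef ∧
    ((α⁻¹ • (1 : Matrix (Fin d) (Fin d) ℝ) - A⁻¹)).PosSemidef := by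
  have hPD := goodQF_posDef hα hG
  have hInv : (A⁻¹).PosDef := hPD.inv
  have hAA : A * A⁻¹ = 1 := Matrix.mul_nonsing_inv A hPD.det_pos.ne'.isUnit
  have key : ∀ x : Fin d → ℝ, M⁻¹ * (x ⬝ᵥ x) ≤ x ⬝ᵥ A⁻¹ *ᵥ x
      ∧ x ⬝ᵥ A⁻¹ *ᵥ x ≤ α⁻¹ * (x ⬝ᵥ x) := by
    intro x
    have hz : A *ᵥ (A⁻¹ *ᵥ x) = x := by rw [Matrix.mulVec_mulVec, hAA, Matrix.one_mulVec]
    obtain ⟨z, hzdef⟩ : ∃ t, t = A⁻¹ *ᵥ x := ⟨_, rfl⟩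
    rw [← hzdef] at hz ⊢
    have ht : x ⬝ᵥ z = z ⬝ᵥ A *ᵥ z := by
      conv_lhs => rw [← hz]
      rw [dotProduct_comm]
    have htnn : 0 ≤ x ⬝ᵥ z := by
      rw [ht]
      exact le_trans (mul_nonneg hα.le (dot_self_nonneg z)) (hG.2.1 z)
    constructor
    · -- lower bound
      have hcs := psd_cs hG.1
        (fun v => le_trans (mul_nonneg hα.le (dot_self_nonneg v)) (hG.2.1 v)) x z
      rw [hz] at hcs
      rw [dotProduct_comm z x, ht] at hcs
      have hup := hG.2.2 x
      have hxx := dot_self_nonneg x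
      rcases eq_or_lt_of_le hxx with hx0 | hx0
      · rw [← hx0]
        simpa using htnn
      · have hzA : 0 ≤ z ⬝ᵥ A *ᵥ z :=
          le_trans (mul_nonneg hα.le (dot_self_nonneg z)) (hG.2.1 z)
        have h5' := mul_le_mul_of_nonneg_right hup hzA
        have h5 : (x ⬝ᵥ x) * (x ⬝ᵥ x) ≤ (M * (z ⬝ᵥ A *ᵥ z)) * (x ⬝ᵥ x) := by
          nlinarith [hcs, h5']
        have h6 : x ⬝ᵥ x ≤ M * (z ⬝ᵥ A *ᵥ z) := le_of_mul_le_mul_right h5 hx0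
        rw [ht]
        calc M⁻¹ * (x ⬝ᵥ x) ≤ M⁻¹ * (M * (z ⬝ᵥ A *ᵥ z)) :=
              mul_le_mul_of_nonneg_left h6 (by positivity)
          _ = z ⬝ᵥ A *ᵥ z := by field_simp
    · -- upper bound
      have h1 : α * (z ⬝ᵥ z) ≤ x ⬝ᵥ z := by rw [ht]; exact hG.2.1 z
      have h2 : x ⬝ᵥ z ≤ nrm x * nrm z := le_trans (le_abs_self _) (abs_dot_le x z)
      rcases eq_or_lt_of_le (nrm_nonneg z) with hz0 | hz0
      · have hzz : z ⬝ᵥ z = 0 := by rw [← nrm_sq, ← hz0]; ring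
        have : x ⬝ᵥ z ≤ 0 := by
          calc x ⬝ᵥ z ≤ nrm x * nrm z := h2
            _ = 0 := by rw [← hz0]; ring
        have : (0:ℝ) ≤ α⁻¹ * (x ⬝ᵥ x) := mul_nonneg (by positivity) (dot_self_nonneg x)
        linarith
      · have h3 : α * nrm z * nrm z ≤ nrm x * nrm z := by
          have := nrm_sq z
          nlinarith
        have h4 : α * nrm z ≤ nrm x := le_of_mul_le_mul_right h3 hz0
        have h5 : nrm z ≤ nrm x / α := by
          rw [le_div_iff₀ hα]
          linarith
        calc x ⬝ᵥ z ≤ nrm x * nrm z := h2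
          _ ≤ nrm x * (nrm x / α) := mul_le_mul_of_nonneg_left h5 (nrm_nonneg x)
          _ = α⁻¹ * (x ⬝ᵥ x) := by rw [← nrm_sq x]; field_simp
  have hsmul_herm : ∀ c : ℝ, (c • (1 : Matrix (Fin d) (Fin d) ℝ)).IsHermitian := by
    intro c
    rw [Matrix.IsHermitian, Matrix.conjTranspose_eq_transpose_of_trivial,
      Matrix.transpose_smul, Matrix.transpose_one]
  constructor
  · refine Matrix.PosSemidef.of_dotProduct_mulVec_nonneg (hInv.1.sub (hsmul_herm M⁻¹)) fun x => ?_
    have hx := (key x).1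
    simp only [star_trivial, Matrix.sub_mulVec, Matrix.smul_mulVec, Matrix.one_mulVec,
      dotProduct_sub, dotProduct_smul, smul_eq_mul]
    linarith
  · refine Matrix.PosSemidef.of_dotProduct_mulVec_nonneg ((hsmul_herm α⁻¹).sub hInv.1) fun x => ?_
    have hx := (key x).2
    simp only [star_trivial, Matrix.sub_mulVec, Matrix.smul_mulVec, Matrix.one_mulVec,
      dotProduct_sub, dotProduct_smul, smul_eq_mul]
    linarith

open scoped MatrixOrder in
lemma b_facts {B : Matrix (Fin d) (Fin d) ℝ} {lam Lam : ℝ} (hlam : 0 < lam)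
    (hBsymm : B.IsSymm)
    (hBlow : (B - lam • (1 : Matrix (Fin d) (Fin d) ℝ)).PosSemidef)
    (hBup : (Lam • (1 : Matrix (Fin d) (Fin d) ℝ) - B).PosSemidef)
    (s : Fin d → ℝ) :
    lam * (s ⬝ᵥ s) ≤ (B *ᵥ s) ⬝ᵥ s ∧ (B *ᵥ s) ⬝ᵥ s ≤ Lam * (s ⬝ᵥ s) ∧
      (B *ᵥ s) ⬝ᵥ (B *ᵥ s) ≤ Lam * ((B *ᵥ s) ⬝ᵥ s) := by
  have hq : ∀ v : Fin d → ℝ, lam * (v ⬝ᵥ v) ≤ v ⬝ᵥ B *ᵥ v := by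
    intro v
    have h := hBlow.dotProduct_mulVec_nonneg v
    simp only [star_trivial, Matrix.sub_mulVec, Matrix.smul_mulVec, Matrix.one_mulVec,
      dotProduct_sub, dotProduct_smul, smul_eq_mul] at h
    linarith
  have hq2 : ∀ v : Fin d → ℝ, v ⬝ᵥ B *ᵥ v ≤ Lam * (v ⬝ᵥ v) := by
    intro v
    have h := hBup.dotProduct_mulVec_nonneg v
    simp only [star_trivial, Matrix.sub_mulVec, Matrix.smul_mulVec, Matrix.one_mulVec,
      dotProduct_sub, dotProduct_smul, smul_eq_mul] at h
    linarith
  have hBs : (B *ᵥ s) ⬝ᵥ s = s ⬝ᵥ B *ᵥ s := dotProduct_comm _ _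
  have hBpsd : B.PosSemidef := Matrix.PosSemidef.of_dotProduct_mulVec_nonneg (isSymm_isHermitian hBsymm) (fun v => by
    simpa [star_trivial] using
      le_trans (mul_nonneg hlam.le (dot_self_nonneg v)) (hq v))
  have hRR : CFC.sqrt B * CFC.sqrt B = B := CFC.sqrt_mul_sqrt_self B hBpsd.nonneg
  have hRsymm : (CFC.sqrt B).IsSymm := by
    have h := (CFC.sqrt_nonneg B).posSemidef.1
    rwa [Matrix.IsHermitian, Matrix.conjTranspose_eq_transpose_of_trivial] at h
  have key : ∀ v : Fin d → ℝ, (CFC.sqrt B *ᵥ v) ⬝ᵥ (CFC.sqrt B *ᵥ v) = v ⬝ᵥ B *ᵥ v := by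
    intro v
    rw [dotProduct_mulVec, ← Matrix.mulVec_transpose, hRsymm.eq, Matrix.mulVec_mulVec, hRR]
    exact dotProduct_comm _ _
  refine ⟨hBs ▸ hq s, hBs ▸ hq2 s, ?_⟩
  have h1 : (B *ᵥ s) ⬝ᵥ (B *ᵥ s) = (CFC.sqrt B *ᵥ s) ⬝ᵥ B *ᵥ (CFC.sqrt B *ᵥ s) := by
    conv_lhs => rw [← hRR, ← Matrix.mulVec_mulVec]
    exact key _
  have h2 : (CFC.sqrt B *ᵥ s) ⬝ᵥ B *ᵥ (CFC.sqrt B *ᵥ s)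
      ≤ Lam * ((CFC.sqrt B *ᵥ s) ⬝ᵥ (CFC.sqrt B *ᵥ s)) := hq2 _
  have h3 : (CFC.sqrt B *ᵥ s) ⬝ᵥ (CFC.sqrt B *ᵥ s) = s ⬝ᵥ B *ᵥ s := key s
  rw [h1, hBs]
  calc (CFC.sqrt B *ᵥ s) ⬝ᵥ B *ᵥ (CFC.sqrt B *ᵥ s)
      ≤ Lam * ((CFC.sqrt B *ᵥ s) ⬝ᵥ (CFC.sqrt B *ᵥ s)) := h2
    _ = Lam * (s ⬝ᵥ B *ᵥ s) := by rw [h3]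

noncomputable def alphaSeq (Sig lam Lam : ℝ) : ℕ → ℝ
  | 0 => Sig⁻¹
  | (j+1) => min (alphaSeq Sig lam Lam j * (min 1 (lam^2/(4*Lam^2)) / 4)) (lam^2/(12*Lam))

lemma alphaSeq_pos {Sig lam Lam : ℝ} (hSig : 0 < Sig) (hlam : 0 < lam) (hll : lam ≤ Lam) :
    ∀ j, 0 < alphaSeq Sig lam Lam j := by
  have hLam : 0 < Lam := hlam.trans_le hll
  intro j
  induction j with
  | zero => simpa [alphaSeq] using inv_pos.2 hSig
  | succ k ih =>
    have h1 : (0:ℝ) < min 1 (lam^2/(4*Lam^2)) / 4 :=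
      div_pos (lt_min one_pos (by positivity)) (by norm_num)
    exact lt_min (mul_pos ih h1) (by positivity)

end BFGSAux

open BFGSAux

theorem stmt10 (d m : ℕ) (hd : 1 ≤ d) (hm : 1 ≤ m)
    (σ Sig lamHat LamHat : ℝ) (hσ : 0 < σ) (hsS : σ ≤ Sig)
    (hlam : 0 < lamHat) (hll : lamHat ≤ LamHat) :
    ∃ μ₁ μ₂ : ℝ, 0 < μ₁ ∧ μ₁ ≤ μ₂ ∧
      ∀ (𝓗 : ℕ → Matrix (Fin d) (Fin d) ℝ) (s y : ℕ → Fin d → ℝ)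
        (B : ℕ → Matrix (Fin d) (Fin d) ℝ),
        (𝓗 0).IsSymm →
        (𝓗 0 - Sig⁻¹ • (1 : Matrix (Fin d) (Fin d) ℝ)).PosSemidef →
        (σ⁻¹ • (1 : Matrix (Fin d) (Fin d) ℝ) - 𝓗 0).PosSemidef →
        (∀ j, 1 ≤ j → j ≤ m → s j ≠ 0) →
        (∀ j, 1 ≤ j → j ≤ m → (B j).IsSymm) →
        (∀ j, 1 ≤ j → j ≤ m →
          (B j - lamHat • (1 : Matrix (Fin d) (Fin d) ℝ)).PosSemidef) →
        (∀ j, 1 ≤ j → j ≤ m →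
          (LamHat • (1 : Matrix (Fin d) (Fin d) ℝ) - B j).PosSemidef) →
        (∀ j, 1 ≤ j → j ≤ m → y j = (B j).mulVec (s j)) →
        (∀ j, j < m → 𝓗 (j + 1) = bfgsUpdate (𝓗 j) (s (j + 1)) (y (j + 1))) →
        (∀ j, j ≤ m → (𝓗 j).PosDef) ∧
          ((𝓗 m)⁻¹ - μ₁ • (1 : Matrix (Fin d) (Fin d) ℝ)).PosSemidef ∧
          (μ₂ • (1 : Matrix (Fin d) (Fin d) ℝ) - (𝓗 m)⁻¹).PosSemidef := by
  have hSig : 0 < Sig := hσ.trans_le hsS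
  have hLam : 0 < LamHat := hlam.trans_le hll
  obtain ⟨αm, hαm⟩ : ∃ t : ℝ, t = alphaSeq Sig lamHat LamHat m := ⟨_, rfl⟩
  have hαm_pos : 0 < αm := hαm ▸ alphaSeq_pos hSig hlam hll m
  obtain ⟨Mm, hMm⟩ : ∃ t : ℝ, t = σ⁻¹ + (m:ℝ) * LamHat := ⟨_, rfl⟩
  have hMm_pos : 0 < Mm := by
    rw [hMm]
    have h0 : (0:ℝ) < σ⁻¹ := inv_pos.2 hσ
    have h1 : (0:ℝ) ≤ (m:ℝ) * LamHat := by positivity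
    linarith
  refine ⟨Mm⁻¹, αm⁻¹, inv_pos.2 hMm_pos, ?_, ?_⟩
  · -- μ₁ ≤ μ₂, i.e. αm ≤ Mm
    have hle : αm ≤ Mm := by
      obtain ⟨k, hk⟩ : ∃ k, m = k + 1 := ⟨m - 1, (Nat.succ_pred_eq_of_pos hm).symm⟩
      have h1 : αm ≤ lamHat^2/(12*LamHat) := by
        rw [hαm, hk]
        exact min_le_right _ _
      have h2 : lamHat^2/(12*LamHat) ≤ LamHat := by
        rw [div_le_iff₀ (by positivity)]
        nlinarith
      have h3 : (1:ℝ) ≤ ((m : ℕ):ℝ) := by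
        exact_mod_cast hm
      have h4 : LamHat ≤ ((m : ℕ):ℝ) * LamHat := by nlinarith
      have h5 : (0:ℝ) < σ⁻¹ := inv_pos.2 hσ
      rw [hMm]
      linarith
    exact inv_anti₀ hαm_pos hle
  · intro 𝓗 s y B h0symm h0low h0up hs0 hBsymm hBlow hBup hyB hupd
    have base : GoodQF Sig⁻¹ (σ⁻¹ + ((0:ℕ):ℝ) * LamHat) (𝓗 0) := by
      refine ⟨h0symm, fun x => ?_, fun x => ?_⟩
      · have h := h0low.dotProduct_mulVec_nonneg x
        simp only [star_trivial, Matrix.sub_mulVec, Matrix.smul_mulVec, Matrix.one_mulVec,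
          dotProduct_sub, dotProduct_smul, smul_eq_mul] at h
        linarith
      · have h := h0up.dotProduct_mulVec_nonneg x
        simp only [star_trivial, Matrix.sub_mulVec, Matrix.smul_mulVec, Matrix.one_mulVec,
          dotProduct_sub, dotProduct_smul, smul_eq_mul] at h
        have : ((0:ℕ):ℝ) * LamHat = 0 := by push_cast; ring
        rw [this]
        linarith
    have main : ∀ j, j ≤ m →
        GoodQF (alphaSeq Sig lamHat LamHat j) (σ⁻¹ + (j:ℝ) * LamHat) (𝓗 j) := by
      intro j
      induction j with
      | zero => intro _; exact base
      | succ k ih =>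
        intro hk1
        have hkm : k ≤ m := le_trans (Nat.le_succ k) hk1
        have hklt : k < m := Nat.lt_of_succ_le hk1
        have hGk := ih hkm
        have h1k : 1 ≤ k + 1 := Nat.le_add_left 1 k
        have hbf := b_facts hlam (hBsymm (k+1) h1k hk1) (hBlow (k+1) h1k hk1)
          (hBup (k+1) h1k hk1) (s (k+1))
        have hy : y (k+1) = (B (k+1)) *ᵥ (s (k+1)) := hyB (k+1) h1k hk1
        have ha1' : lamHat * (s (k+1) ⬝ᵥ s (k+1)) ≤ y (k+1) ⬝ᵥ s (k+1) := by
          rw [hy]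
          exact hbf.1
        have ha2' : y (k+1) ⬝ᵥ s (k+1) ≤ LamHat * (s (k+1) ⬝ᵥ s (k+1)) := by
          rw [hy]
          exact hbf.2.1
        have hyy' : y (k+1) ⬝ᵥ y (k+1) ≤ LamHat * (y (k+1) ⬝ᵥ s (k+1)) := by
          rw [hy]
          exact hbf.2.2
        have hstep := good_step (alphaSeq_pos hSig hlam hll k) hlam hll hGk
          (hs0 (k+1) h1k hk1) ha1' ha2' hyy'
        rw [← hupd k hklt] at hstep
        have hM : (σ⁻¹ + (k:ℝ) * LamHat) + LamHat = σ⁻¹ + ((k+1 : ℕ):ℝ) * LamHat := by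
          push_cast
          ring
        rw [hM] at hstep
        exact hstep
    have hGm : GoodQF αm Mm (𝓗 m) := by
      rw [hαm, hMm]
      exact main m le_rfl
    refine ⟨fun j hj => goodQF_posDef (alphaSeq_pos hSig hlam hll j) (main j hj), ?_, ?_⟩
    · exact (good_inv hαm_pos hMm_pos hGm).1
    · exact (good_inv hαm_pos hMm_pos hGm).2
end

section
/- Suppose each f_i : ℝ^d → ℝ (i = 1,…,n, n ≥ 2) is convex and Λ-smooth, F(w) = (1/n) ∑_{i=1}^n f_i(w) is λ-strongly convex with global minimizer w_* and F* = F(w_*). Let 1 ≤ b ≤ n, β(b) = (n−b)/(b(n−1)), N = (2/n) ∑_{i=1}^n ‖∇f_i(w_*)‖². Let H be a real symmetric d×d matrix with μ₁ I ⪯ H ⪯ μ₂ I (0 < μ₁ ≤ μ₂), and let α ∈ (0, λμ₁ / (μ₂² (λ + Λ β(b)) Λ)). Then for every w ∈ ℝ^d, averaging uniformly over all size-b subsets S of {1,…,n}: E_S[F(w − α H ∇F^S(w))] − F* ≤ [1 − 2α(λμ₁ − α μ₂² (λ + Λ β(b)) Λ)] (F(w) − F*) + (α² μ₂² Λ N)/2.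 -/
open scoped Matrix RealInnerProductSpace
open Finset

section AuxAnalysis

open Set

variable {E : Type*} [NormedAddCommGroup E] [InnerProductSpace ℝ E] [CompleteSpace E]

lemma aux_grad_avg {n : ℕ} (f : Fin n → E → ℝ) (hdiff : ∀ i, Differentiable ℝ (f i))
    (c : ℝ) (x : E) :
    HasGradientAt (fun w => c * ∑ i, f i w) (c • ∑ i, gradient (f i) x) x := by
  rw [hasGradientAt_iff_hasFDerivAt]
  have h1 : ∀ i : Fin n, HasFDerivAt (f i)
      ((InnerProductSpace.toDual ℝ E) (gradient (f i) x) : E →L[ℝ] ℝ) x :=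
    fun i => hasGradientAt_iff_hasFDerivAt.1 ((hdiff i x).hasGradientAt)
  have h2 := (HasFDerivAt.sum (fun i (_ : i ∈ Finset.univ) => h1 i)).const_mul c
  simp only [Finset.sum_apply] at h2
  refine h2.congr_fderiv ?_
  ext y
  simp [InnerProductSpace.toDual_apply_apply, inner_smul_left, sum_inner, mul_comm]

lemma aux_line_hasDerivAt (h : E → ℝ) (hd : Differentiable ℝ h) (x v : E) (t : ℝ) :
    HasDerivAt (fun s : ℝ => h (x + s • v)) ⟪gradient h (x + t • v), v⟫ t := by
  have hc : HasDerivAt (fun s : ℝ => x + s • v) v t := by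
    simpa using ((hasDerivAt_id t).smul_const v).const_add x
  have hf : HasFDerivAt h ((InnerProductSpace.toDual ℝ E) (gradient h (x + t • v)) : E →L[ℝ] ℝ)
      (x + t • v) := hasGradientAt_iff_hasFDerivAt.1 (hd _).hasGradientAt
  have := hf.comp_hasDerivAt t hc
  simp only [InnerProductSpace.toDual_apply_apply] at this
  exact this

/-- first-order condition for convexity -/
lemma aux_convex_first_order {h : E → ℝ} (hc : ConvexOn ℝ Set.univ h) (hd : Differentiable ℝ h)
    (x y : E) : h x + ⟪gradient h x, y - x⟫ ≤ h y := by
  set v := y - x with hv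
  have hφ : ConvexOn ℝ Set.univ (fun s : ℝ => h (x + s • v)) := by
    have h2 := hc.comp_affineMap (AffineMap.lineMap x y : ℝ →ᵃ[ℝ] E)
    simp only [Set.preimage_univ] at h2
    have h3 : (fun s : ℝ => h (x + s • v)) = h ∘ (AffineMap.lineMap x y : ℝ →ᵃ[ℝ] E) := by
      funext s
      have h4 : x + s • v = (AffineMap.lineMap x y : ℝ →ᵃ[ℝ] E) s := by
        simp only [AffineMap.lineMap_apply, hv, vsub_eq_sub, vadd_eq_add]
        module
      rw [Function.comp_apply, h4]
    rw [h3]; exact h2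
  have hder := aux_line_hasDerivAt h hd x v 0
  have := hφ.le_slope_of_hasDerivAt (mem_univ (0:ℝ)) (mem_univ (1:ℝ)) one_pos hder
  rw [slope_def_field] at this
  simp only [zero_smul, add_zero, one_smul] at this hder ⊢
  have hx1 : x + v = y := by rw [hv]; abel
  rw [hx1] at this
  simp only [div_one, sub_zero] at this
  linarith [this]

/-- descent lemma (quadratic upper bound) for functions with Lipschitz gradient -/
lemma aux_descent_lemma {h : E → ℝ} (hd : Differentiable ℝ h) {L : ℝ}
    (hL : ∀ x y : E, ‖gradient h y - gradient h x‖ ≤ L * ‖y - x‖) (x y : E) :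
    h y ≤ h x + ⟪gradient h x, y - x⟫ + L / 2 * ‖y - x‖ ^ 2 := by
  set v := y - x with hv
  set ψ : ℝ → ℝ := fun t => h (x + t • v) - t * ⟪gradient h x, v⟫ - L / 2 * ‖v‖ ^ 2 * t ^ 2
    with hψ
  have hder : ∀ t : ℝ, HasDerivAt ψ
      (⟪gradient h (x + t • v), v⟫ - ⟪gradient h x, v⟫ - L * ‖v‖ ^ 2 * t) t := by
    intro t
    have h1 := aux_line_hasDerivAt h hd x v t
    have h2 : HasDerivAt (fun t : ℝ => t * ⟪gradient h x, v⟫) ⟪gradient h x, v⟫ t := by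
      simpa using (hasDerivAt_id t).mul_const ⟪gradient h x, v⟫
    have h3 : HasDerivAt (fun t : ℝ => L / 2 * ‖v‖ ^ 2 * t ^ 2) (L * ‖v‖ ^ 2 * t) t := by
      have := ((hasDerivAt_pow 2 t)).const_mul (L / 2 * ‖v‖ ^ 2)
      refine this.congr_deriv ?_
      ring
    exact (h1.sub h2).sub h3
  have hmono : AntitoneOn ψ (Icc (0:ℝ) 1) := by
    apply antitoneOn_of_deriv_nonpos (convex_Icc (0:ℝ) 1)
    · exact Continuous.continuousOn (by
        have : Continuous ψ := by
          apply Continuous.sub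
          apply Continuous.sub
          · exact hd.continuous.comp (by continuity)
          · continuity
          · continuity
        exact this)
    · intro t _
      exact ((hder t).differentiableAt).differentiableWithinAt
    · intro t ht
      rw [interior_Icc] at ht
      rw [(hder t).deriv]
      have hb1 : ⟪gradient h (x + t • v) - gradient h x, v⟫ ≤ L * ‖v‖ ^ 2 * t := by
        calc ⟪gradient h (x + t • v) - gradient h x, v⟫
            ≤ ‖gradient h (x + t • v) - gradient h x‖ * ‖v‖ := real_inner_le_norm _ _
          _ ≤ (L * ‖(x + t • v) - x‖) * ‖v‖ := by
              apply mul_le_mul_of_nonneg_right (hL x (x + t • v)) (norm_nonneg v)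
          _ = L * ‖v‖ ^ 2 * t := by
              simp [norm_smul, abs_of_pos ht.1]
              ring
      rw [inner_sub_left] at hb1
      linarith
  have h01 := hmono (Set.mem_Icc.2 ⟨le_refl 0, zero_le_one⟩)
    (Set.mem_Icc.2 ⟨zero_le_one, le_refl 1⟩) zero_le_one
  have hx0 : x + (0:ℝ) • v = x := by simp
  have hx1 : x + (1:ℝ) • v = y := by rw [hv]; simp
  simp only [hψ, hx0, hx1] at h01
  nlinarith [h01]

lemma aux_grad_sub_linear (h : E → ℝ) (hd : Differentiable ℝ h) (c z : E) :
    HasGradientAt (fun z => h z - ⟪c, z⟫) (gradient h z - c) z := by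
  rw [hasGradientAt_iff_hasFDerivAt]
  have h1 : HasFDerivAt h ((InnerProductSpace.toDual ℝ E) (gradient h z) : E →L[ℝ] ℝ) z :=
    hasGradientAt_iff_hasFDerivAt.1 (hd z).hasGradientAt
  have h2 : HasFDerivAt (fun z : E => ⟪c, z⟫) (innerSL ℝ c : E →L[ℝ] ℝ) z :=
    (innerSL ℝ c).hasFDerivAt
  refine (h1.sub h2).congr_fderiv ?_
  ext u
  simp [InnerProductSpace.toDual_apply_apply, inner_sub_left]

lemma aux_cocoercivity {h : E → ℝ} (hc : ConvexOn ℝ Set.univ h) (hd : Differentiable ℝ h)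
    {L : ℝ} (hL0 : 0 < L)
    (hL : ∀ x y : E, ‖gradient h y - gradient h x‖ ≤ L * ‖y - x‖) (x y : E) :
    ‖gradient h y - gradient h x‖ ^ 2 ≤ 2 * L * (h y - h x - ⟪gradient h x, y - x⟫) := by
  set c := gradient h x with hcc
  set φ : E → ℝ := fun z => h z - ⟪c, z⟫ with hφ
  have hφd : Differentiable ℝ φ := fun z => ((aux_grad_sub_linear h hd c z).differentiableAt)
  have hφg : ∀ z, gradient φ z = gradient h z - c := fun z =>
    (aux_grad_sub_linear h hd c z).gradient
  have hφL : ∀ a b : E, ‖gradient φ b - gradient φ a‖ ≤ L * ‖b - a‖ := by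
    intro a b
    rw [hφg, hφg, sub_sub_sub_cancel_right]
    exact hL a b
  set g := gradient h y - c with hg
  set z := y - L⁻¹ • g with hz
  have hdesc := aux_descent_lemma hφd hφL y z
  have h1 : φ z ≤ φ y - ‖g‖ ^ 2 / (2 * L) := by
    have hzy : z - y = -(L⁻¹ • g) := by rw [hz]; abel
    have e1 : ⟪gradient φ y, z - y⟫ = -(L⁻¹ * ‖g‖ ^ 2) := by
      rw [hφg, ← hg, hzy, inner_neg_right, real_inner_smul_right, real_inner_self_eq_norm_sq]
    have e2 : ‖z - y‖ ^ 2 = L⁻¹ ^ 2 * ‖g‖ ^ 2 := by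
      rw [hzy, norm_neg, norm_smul]
      simp [abs_of_pos (inv_pos.2 hL0), mul_pow]
    rw [e1, e2] at hdesc
    have : L / 2 * (L⁻¹ ^ 2 * ‖g‖ ^ 2) = ‖g‖ ^ 2 / (2 * L) := by
      field_simp
    rw [this] at hdesc
    have : -(L⁻¹ * ‖g‖ ^ 2) = -(‖g‖^2 / L) := by field_simp
    rw [this] at hdesc
    calc φ z ≤ φ y + -(‖g‖ ^ 2 / L) + ‖g‖ ^ 2 / (2 * L) := hdesc
      _ = φ y - ‖g‖ ^ 2 / (2 * L) := by field_simp; ring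
  have h2 : φ x ≤ φ z := by
    have := aux_convex_first_order hc hd x z
    rw [hφ]
    simp only
    rw [inner_sub_right] at this
    linarith
  have h3 : φ y - φ x = h y - h x - ⟪c, y - x⟫ := by
    rw [hφ]; simp only; rw [inner_sub_right]; ring
  have h2' : φ x ≤ φ y - ‖g‖ ^ 2 / (2 * L) := le_trans h2 h1
  have h4 : ‖g‖ ^ 2 / (2 * L) ≤ h y - h x - ⟪c, y - x⟫ := by
    calc ‖g‖ ^ 2 / (2 * L) ≤ φ y - φ x := by linarith [h2']
      _ = h y - h x - ⟪c, y - x⟫ := h3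
  calc ‖g‖ ^ 2 = 2 * L * (‖g‖ ^ 2 / (2 * L)) := by field_simp
    _ ≤ 2 * L * (h y - h x - ⟪c, y - x⟫) := by
        apply mul_le_mul_of_nonneg_left h4 (by positivity)

end AuxAnalysis

section AuxCombinatorics

lemma aux_count_supersets {α : Type*} [Fintype α] [DecidableEq α] (T : Finset α) (b : ℕ)
    (hT : T.card ≤ b) :
    ((Finset.powersetCard b (Finset.univ : Finset α)).filter (fun S => T ⊆ S)).card
      = (Fintype.card α - T.card).choose (b - T.card) := by
  have : (Fintype.card α - T.card).choose (b - T.card)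
      = (Finset.powersetCard (b - T.card) Tᶜ).card := by
    rw [Finset.card_powersetCard, Finset.card_compl]
  rw [this]
  apply Finset.card_nbij' (fun S => S \ T) (fun U => U ∪ T)
  · intro S hS
    simp only [Finset.mem_coe, Finset.mem_filter, Finset.mem_powersetCard] at hS
    obtain ⟨⟨-, hcard⟩, hTS⟩ := hS
    rw [Finset.mem_coe, Finset.mem_powersetCard]
    constructor
    · intro x hx
      simp only [Finset.mem_sdiff] at hx
      simp [Finset.mem_compl, hx.2]
    · rw [Finset.card_sdiff_of_subset hTS, hcard]
  · intro U hU
    rw [Finset.mem_coe, Finset.mem_powersetCard] at hU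
    obtain ⟨hUc, hcard⟩ := hU
    have hdisj : Disjoint U T := by
      rw [Finset.disjoint_left]
      intro x hx hxT
      have := hUc hx
      simp [Finset.mem_compl, hxT] at this
    simp only [Finset.mem_coe, Finset.mem_filter, Finset.mem_powersetCard]
    refine ⟨⟨Finset.subset_univ _, ?_⟩, Finset.subset_union_right⟩
    rw [Finset.card_union_of_disjoint hdisj, hcard]
    omega
  · intro S hS
    simp only [Finset.mem_coe, Finset.mem_filter] at hS
    exact Finset.sdiff_union_of_subset hS.2
  · intro U hU
    simp only [Finset.mem_coe, Finset.mem_powersetCard] at hU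
    have hdisj : Disjoint U T := by
      rw [Finset.disjoint_left]
      intro x hx hxT
      have := hU.1 hx
      simp [Finset.mem_compl, hxT] at this
    exact Finset.union_sdiff_cancel_right hdisj

variable {E : Type*} [NormedAddCommGroup E] [InnerProductSpace ℝ E]

lemma aux_swap_sum {n b : ℕ} {M : Type*} [AddCommMonoid M] (g : Fin n → M) :
    ∑ S ∈ powersetCard b (univ : Finset (Fin n)), ∑ i ∈ S, g i
      = ∑ i, ((powersetCard b (univ : Finset (Fin n))).filter (fun S => i ∈ S)).card • g i := by
  have h1 : ∀ S ∈ powersetCard b (univ : Finset (Fin n)),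
      ∑ i ∈ S, g i = ∑ i, if i ∈ S then g i else 0 := by
    intro S _
    rw [Finset.sum_ite_mem, Finset.univ_inter]
  rw [Finset.sum_congr rfl h1, Finset.sum_comm]
  apply Finset.sum_congr rfl
  intro i _
  rw [← Finset.sum_filter, Finset.sum_const]

lemma aux_cnt_single {n b : ℕ} (hb1 : 1 ≤ b) (i : Fin n) :
    ((powersetCard b (univ : Finset (Fin n))).filter (fun S => i ∈ S)).card
      = (n - 1).choose (b - 1) := by
  have h := aux_count_supersets ({i} : Finset (Fin n)) b (by simpa using hb1)
  simp only [Finset.card_singleton, Fintype.card_fin, Finset.singleton_subset_iff] at h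
  exact h

lemma aux_cnt_pair {n b : ℕ} (hb2 : 2 ≤ b) {i j : Fin n} (hij : i ≠ j) :
    ((powersetCard b (univ : Finset (Fin n))).filter (fun S => i ∈ S ∧ j ∈ S)).card
      = (n - 2).choose (b - 2) := by
  have h := aux_count_supersets ({i, j} : Finset (Fin n)) b
    (by rw [Finset.card_pair hij]; exact hb2)
  rw [Finset.card_pair hij] at h
  simp only [Fintype.card_fin, Finset.insert_subset_iff, Finset.singleton_subset_iff] at h
  exact h

lemma aux_cnt_pair_one {n : ℕ} {i j : Fin n} (hij : i ≠ j) :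
    ((powersetCard 1 (univ : Finset (Fin n))).filter (fun S => i ∈ S ∧ j ∈ S)).card = 0 := by
  rw [Finset.card_eq_zero, Finset.filter_eq_empty_iff]
  intro S hS
  rw [Finset.mem_powersetCard] at hS
  rintro ⟨hi, hj⟩
  have : 2 ≤ S.card := Finset.one_lt_card.2 ⟨i, hi, j, hj, hij⟩
  omega

lemma aux_sum_sq_split {n b : ℕ} (v : Fin n → E) (c1 c2 : ℕ)
    (h1 : ∀ i : Fin n,
      ((powersetCard b (univ : Finset (Fin n))).filter (fun S => i ∈ S ∧ i ∈ S)).card = c1)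
    (h2 : ∀ i j : Fin n, i ≠ j →
      ((powersetCard b (univ : Finset (Fin n))).filter (fun S => i ∈ S ∧ j ∈ S)).card = c2) :
    ∑ S ∈ powersetCard b (univ : Finset (Fin n)), ‖∑ i ∈ S, v i‖ ^ 2
      = (c1 : ℝ) * ∑ i, ‖v i‖ ^ 2 + (c2 : ℝ) * (‖∑ i, v i‖ ^ 2 - ∑ i, ‖v i‖ ^ 2) := by
  have step1 : ∀ S ∈ powersetCard b (univ : Finset (Fin n)),
      ‖∑ i ∈ S, v i‖ ^ 2 = ∑ i, ∑ j, (if i ∈ S ∧ j ∈ S then ⟪v i, v j⟫ else 0) := by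
    intro S _
    rw [← real_inner_self_eq_norm_sq, sum_inner]
    have : ∀ i ∈ S, ⟪v i, ∑ j ∈ S, v j⟫ = ∑ j ∈ S, ⟪v i, v j⟫ := fun i _ => inner_sum _ _ _
    rw [Finset.sum_congr rfl this]
    rw [show (∑ i ∈ S, ∑ j ∈ S, ⟪v i, v j⟫)
        = ∑ i, if i ∈ S then ∑ j ∈ S, ⟪v i, v j⟫ else 0 by
      rw [Finset.sum_ite_mem, Finset.univ_inter]]
    apply Finset.sum_congr rfl
    intro i _
    by_cases hi : i ∈ S
    · simp only [hi, if_true, true_and]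
      rw [Finset.sum_ite_mem, Finset.univ_inter]
    · simp [hi]
  rw [Finset.sum_congr rfl step1, Finset.sum_comm]
  have step2 : ∀ i : Fin n,
      ∑ S ∈ powersetCard b (univ : Finset (Fin n)), ∑ j, (if i ∈ S ∧ j ∈ S then ⟪v i, v j⟫ else 0)
      = ∑ j, (((powersetCard b (univ : Finset (Fin n))).filter
          (fun S => i ∈ S ∧ j ∈ S)).card : ℝ) * ⟪v i, v j⟫ := by
    intro i
    rw [Finset.sum_comm]
    apply Finset.sum_congr rfl
    intro j _
    rw [← Finset.sum_filter, Finset.sum_const, nsmul_eq_mul]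
  rw [Finset.sum_congr rfl (fun i _ => step2 i)]
  have step3 : ∀ i : Fin n,
      ∑ j, (((powersetCard b (univ : Finset (Fin n))).filter
          (fun S => i ∈ S ∧ j ∈ S)).card : ℝ) * ⟪v i, v j⟫
      = (c1 : ℝ) * ‖v i‖ ^ 2 + (c2 : ℝ) * (⟪v i, ∑ j, v j⟫ - ‖v i‖ ^ 2) := by
    intro i
    rw [← Finset.add_sum_erase _ _ (Finset.mem_univ i)]
    rw [h1 i, real_inner_self_eq_norm_sq]
    have : ∀ j ∈ Finset.univ.erase i,
        (((powersetCard b (univ : Finset (Fin n))).filter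
          (fun S => i ∈ S ∧ j ∈ S)).card : ℝ) * ⟪v i, v j⟫ = (c2:ℝ) * ⟪v i, v j⟫ := by
      intro j hj
      rw [h2 i j (Ne.symm (Finset.ne_of_mem_erase hj))]
    rw [Finset.sum_congr rfl this, ← Finset.mul_sum]
    congr 1
    congr 1
    rw [inner_sum, ← Finset.add_sum_erase _ _ (Finset.mem_univ i), real_inner_self_eq_norm_sq]
    ring
  rw [Finset.sum_congr rfl (fun i _ => step3 i)]
  rw [Finset.sum_add_distrib, ← Finset.mul_sum, ← Finset.mul_sum]
  congr 1
  congr 1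
  rw [Finset.sum_sub_distrib, ← sum_inner, real_inner_self_eq_norm_sq]

lemma aux_nat_c1 (n b : ℕ) (hn : 1 ≤ n) (hb : 1 ≤ b) :
    n * (n - 1).choose (b - 1) = n.choose b * b := by
  obtain ⟨m, rfl⟩ : ∃ m, n = m + 1 := ⟨n - 1, by omega⟩
  obtain ⟨c, rfl⟩ : ∃ c, b = c + 1 := ⟨b - 1, by omega⟩
  simpa using Nat.add_one_mul_choose_eq m c

end AuxCombinatorics

section AuxMatrix

variable {d : ℕ}

lemma aux_quad_lower (H : Matrix (Fin d) (Fin d) ℝ) (μ : ℝ)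
    (h : (H - μ • (1 : Matrix (Fin d) (Fin d) ℝ)).PosSemidef) (x : EuclideanSpace ℝ (Fin d)) :
    μ * ‖x‖ ^ 2 ≤ ⟪x, Matrix.toEuclideanLin H x⟫ := by
  have h2 := h.dotProduct_mulVec_nonneg ((WithLp.equiv 2 (Fin d → ℝ)) x)
  simp only [Matrix.sub_mulVec, Matrix.smul_mulVec, Matrix.one_mulVec,
    dotProduct_sub, dotProduct_smul, star_trivial, smul_eq_mul] at h2
  have e1 : ⟪x, Matrix.toEuclideanLin H x⟫
      = (WithLp.equiv 2 (Fin d → ℝ)) x ⬝ᵥ (H *ᵥ (WithLp.equiv 2 (Fin d → ℝ)) x) := by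
    rw [Matrix.toEuclideanLin_apply]
    simp [PiLp.inner_apply, dotProduct, mul_comm]
  have e2 : ‖x‖ ^ 2 = (WithLp.equiv 2 (Fin d → ℝ)) x ⬝ᵥ (WithLp.equiv 2 (Fin d → ℝ)) x := by
    rw [← real_inner_self_eq_norm_sq]
    simp only [PiLp.inner_apply, dotProduct, RCLike.inner_apply, conj_trivial, WithLp.equiv_apply]
  rw [e1, e2]
  linarith

lemma aux_quad_upper (H : Matrix (Fin d) (Fin d) ℝ) (μ : ℝ)
    (h : (μ • (1 : Matrix (Fin d) (Fin d) ℝ) - H).PosSemidef) (x : EuclideanSpace ℝ (Fin d)) :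
    ⟪x, Matrix.toEuclideanLin H x⟫ ≤ μ * ‖x‖ ^ 2 := by
  have h2 := h.dotProduct_mulVec_nonneg ((WithLp.equiv 2 (Fin d → ℝ)) x)
  simp only [Matrix.sub_mulVec, Matrix.smul_mulVec, Matrix.one_mulVec,
    dotProduct_sub, dotProduct_smul, star_trivial, smul_eq_mul] at h2
  have e1 : ⟪x, Matrix.toEuclideanLin H x⟫
      = (WithLp.equiv 2 (Fin d → ℝ)) x ⬝ᵥ (H *ᵥ (WithLp.equiv 2 (Fin d → ℝ)) x) := by
    rw [Matrix.toEuclideanLin_apply]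
    simp [PiLp.inner_apply, dotProduct, mul_comm]
  have e2 : ‖x‖ ^ 2 = (WithLp.equiv 2 (Fin d → ℝ)) x ⬝ᵥ (WithLp.equiv 2 (Fin d → ℝ)) x := by
    rw [← real_inner_self_eq_norm_sq]
    simp only [PiLp.inner_apply, dotProduct, RCLike.inner_apply, conj_trivial, WithLp.equiv_apply]
  rw [e1, e2]
  linarith

lemma aux_symm_inner (H : Matrix (Fin d) (Fin d) ℝ) (hsym : H.IsSymm)
    (x y : EuclideanSpace ℝ (Fin d)) :
    ⟪x, Matrix.toEuclideanLin H y⟫ = ⟪y, Matrix.toEuclideanLin H x⟫ := by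
  have hherm : H.IsHermitian := hsym
  have := (Matrix.isHermitian_iff_isSymmetric.1 hherm) x y
  rw [← this, real_inner_comm]

lemma aux_opnorm_bound (H : Matrix (Fin d) (Fin d) ℝ) (hsym : H.IsSymm) (μ₁ μ₂ : ℝ)
    (hμ : 0 < μ₁) (hμμ : μ₁ ≤ μ₂)
    (hlow : (H - μ₁ • (1 : Matrix (Fin d) (Fin d) ℝ)).PosSemidef)
    (hup : (μ₂ • (1 : Matrix (Fin d) (Fin d) ℝ) - H).PosSemidef)
    (x : EuclideanSpace ℝ (Fin d)) :
    ‖Matrix.toEuclideanLin H x‖ ≤ μ₂ * ‖x‖ := by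
  set L := Matrix.toEuclideanLin H with hL
  have key : ∀ y : EuclideanSpace ℝ (Fin d), ⟪y, L x⟫ ≤ μ₂ / 2 * (‖x‖ ^ 2 + ‖y‖ ^ 2) := by
    intro y
    have hxy1 : ⟪x + y, L (x + y)⟫ ≤ μ₂ * ‖x + y‖ ^ 2 := aux_quad_upper H μ₂ hup _
    have hxy2 : μ₁ * ‖x - y‖ ^ 2 ≤ ⟪x - y, L (x - y)⟫ := aux_quad_lower H μ₁ hlow _
    have hsymm := aux_symm_inner H hsym x y
    have expand1 : ⟪x + y, L (x + y)⟫
        = ⟪x, L x⟫ + ⟪y, L y⟫ + 2 * ⟪y, L x⟫ := by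
      rw [map_add, inner_add_left, inner_add_right, inner_add_right, hsymm]
      ring
    have expand2 : ⟪x - y, L (x - y)⟫
        = ⟪x, L x⟫ + ⟪y, L y⟫ - 2 * ⟪y, L x⟫ := by
      rw [map_sub, inner_sub_left, inner_sub_right, inner_sub_right, hsymm]
      ring
    have hnorm : ‖x + y‖ ^ 2 ≤ 2 * (‖x‖ ^ 2 + ‖y‖ ^ 2) := by
      have := norm_add_sq_real x y
      have := real_inner_le_norm x y
      nlinarith [norm_nonneg x, norm_nonneg y, sq_nonneg (‖x‖ - ‖y‖)]
    nlinarith [sq_nonneg ‖x - y‖, mul_nonneg hμ.le (sq_nonneg ‖x - y‖)]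
  by_cases hx0 : L x = 0
  · rw [hx0, norm_zero]
    exact mul_nonneg (le_trans hμ.le hμμ) (norm_nonneg x)
  · have hLx : 0 < ‖L x‖ := norm_pos_iff.2 hx0
    have := key ((‖x‖ / ‖L x‖) • L x)
    rw [real_inner_smul_left, real_inner_self_eq_norm_sq, norm_smul] at this
    rw [Real.norm_eq_abs, abs_of_nonneg (by positivity)] at this
    have h2 : ‖x‖ / ‖L x‖ * ‖L x‖ ^ 2 = ‖x‖ * ‖L x‖ := by
      field_simp
    have h3 : (‖x‖ / ‖L x‖ * ‖L x‖) ^ 2 = ‖x‖ ^ 2 := by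
      field_simp
    rw [h2, h3] at this
    by_cases hx : x = 0
    · exact absurd (by rw [hx, map_zero]) hx0
    · have hxn : 0 < ‖x‖ := norm_pos_iff.2 hx
      have : ‖x‖ * ‖L x‖ ≤ μ₂ * ‖x‖ ^ 2 := by linarith
      calc ‖L x‖ = ‖x‖ * ‖L x‖ / ‖x‖ := by field_simp
        _ ≤ μ₂ * ‖x‖ ^ 2 / ‖x‖ := by gcongr
        _ = μ₂ * ‖x‖ := by field_simp

end AuxMatrix

set_option maxHeartbeats 1000000 in
lemma aux_final_arith (D N M Q P' lam Λ μ₁ μ₂ β α EE : ℝ)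
    (hE : EE ≤ D - α*Q + (Λ*α^2*μ₂^2/2) * (β * P' + (1-β)*M))
    (hQ : μ₁ * M ≤ Q) (hM : 2*lam*D ≤ M) (hP : P' ≤ 4*Λ*D + N)
    (hD : 0 ≤ D) (hN : 0 ≤ N) (hβ0 : 0 ≤ β) (hβ1 : β ≤ 1)
    (hlam : 0 < lam) (hΛ : 0 < Λ) (hμ : 0 < μ₁) (hμ2 : 0 < μ₂)
    (hα : 0 < α) (hαkey : α * (μ₂^2 * (lam+Λ*β) * Λ) < lam * μ₁) :
    EE ≤ (1 - 2*α*(lam*μ₁ - α*μ₂^2*(lam+Λ*β)*Λ)) * D + α^2*μ₂^2*Λ*N/2 := by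
  set c0 := Λ*α^2*μ₂^2/2 with hc0
  have hc0pos : 0 < c0 := by positivity
  have hsmall : c0 < α * μ₁ / 2 := by
    have h1 : α * (μ₂^2 * lam * Λ) ≤ α * (μ₂^2 * (lam+Λ*β) * Λ) := by
      have h0 : 0 ≤ μ₂^2 * Λ^2 * β := by positivity
      have : μ₂^2 * lam * Λ ≤ μ₂^2 * (lam+Λ*β) * Λ := by nlinarith
      nlinarith
    have h2 : α * (μ₂^2 * lam * Λ) < lam * μ₁ := lt_of_le_of_lt h1 hαkey
    have h3 : α * μ₂^2 * Λ < μ₁ := by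
      nlinarith
    nlinarith
  have s2 : c0 * (β * P') ≤ c0 * (β * (4*Λ*D + N)) := by
    apply mul_le_mul_of_nonneg_left _ hc0pos.le
    exact mul_le_mul_of_nonneg_left hP hβ0
  have s3 : -(α*Q) ≤ -(α*(μ₁*M)) := by
    have := mul_le_mul_of_nonneg_left hQ hα.le
    linarith
  have s4 : EE ≤ D + (-(α*μ₁) + c0*(1-β)) * M + c0 * (β * (4*Λ*D + N)) := by
    nlinarith [hE, s2, s3]
  have hneg : -(α*μ₁) + c0*(1-β) ≤ 0 := by nlinarith
  have s6 : (-(α*μ₁) + c0*(1-β)) * M ≤ (-(α*μ₁) + c0*(1-β)) * (2*lam*D) := by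
    apply mul_le_mul_of_nonpos_left hM hneg
  have s7 : EE ≤ D + (-(α*μ₁) + c0*(1-β)) * (2*lam*D) + c0 * (β * (4*Λ*D + N)) := by linarith
  have s8 : D + (-(α*μ₁) + c0*(1-β)) * (2*lam*D) + c0 * (β * (4*Λ*D + N))
      ≤ (1 - 2*α*(lam*μ₁ - α*μ₂^2*(lam+Λ*β)*Λ)) * D + α^2*μ₂^2*Λ*N/2 := by
    rw [hc0]
    nlinarith [mul_nonneg hD (mul_nonneg (mul_nonneg (sq_nonneg α) (sq_nonneg μ₂))
        (mul_nonneg hΛ.le (mul_nonneg hlam.le (by linarith : (0:ℝ) ≤ 1 + β)))),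
      mul_nonneg hN (mul_nonneg (mul_nonneg (sq_nonneg α) (sq_nonneg μ₂))
        (mul_nonneg hΛ.le (by linarith : (0:ℝ) ≤ 1 - β)))]
  linarith

set_option maxHeartbeats 3000000 in
theorem stmt13 (d n b : ℕ) (hn : 2 ≤ n) (hb1 : 1 ≤ b) (hbn : b ≤ n)
    (Λ lam : ℝ) (hlam : 0 < lam)
    (f : Fin n → EuclideanSpace ℝ (Fin d) → ℝ)
    (hdiff : ∀ i, Differentiable ℝ (f i))
    (hconv : ∀ i, ConvexOn ℝ Set.univ (f i))
    (hsmooth : ∀ i, ∀ w w' : EuclideanSpace ℝ (Fin d),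
      ‖gradient (f i) w' - gradient (f i) w‖ ≤ Λ * ‖w' - w‖)
    (F : EuclideanSpace ℝ (Fin d) → ℝ) (hF : ∀ w, F w = (n : ℝ)⁻¹ * ∑ i, f i w)
    (hsc : ∀ w w' : EuclideanSpace ℝ (Fin d),
      F w' ≥ F w + ⟪gradient F w, w' - w⟫ + lam / 2 * ‖w' - w‖ ^ 2)
    (wstar : EuclideanSpace ℝ (Fin d)) (hmin : ∀ w, F wstar ≤ F w)
    (β N : ℝ) (hβ : β = ((n : ℝ) - b) / (b * ((n : ℝ) - 1)))
    (hN : N = 2 / (n : ℝ) * ∑ i, ‖gradient (f i) wstar‖ ^ 2)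
    (H : Matrix (Fin d) (Fin d) ℝ) (hsym : H.IsSymm)
    (μ₁ μ₂ : ℝ) (hμ : 0 < μ₁) (hμμ : μ₁ ≤ μ₂)
    (hlow : (H - μ₁ • (1 : Matrix (Fin d) (Fin d) ℝ)).PosSemidef)
    (hup : (μ₂ • (1 : Matrix (Fin d) (Fin d) ℝ) - H).PosSemidef)
    (α : ℝ) (hα0 : 0 < α) (hα1 : α < lam * μ₁ / (μ₂ ^ 2 * (lam + Λ * β) * Λ))
    (w : EuclideanSpace ℝ (Fin d)) :
    (∑ S ∈ Finset.powersetCard b (Finset.univ : Finset (Fin n)),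
        F (w - α • Matrix.toEuclideanLin H ((b : ℝ)⁻¹ • ∑ i ∈ S, gradient (f i) w)))
        / (n.choose b : ℝ) - F wstar
      ≤ (1 - 2 * α * (lam * μ₁ - α * μ₂ ^ 2 * (lam + Λ * β) * Λ)) * (F w - F wstar)
        + α ^ 2 * μ₂ ^ 2 * Λ * N / 2 := by
  have hn0 : (0:ℝ) < n := by positivity
  have hnne : (n:ℝ) ≠ 0 := ne_of_gt hn0
  have hb0 : (0:ℝ) < b := by exact_mod_cast hb1
  have hbne : (b:ℝ) ≠ 0 := ne_of_gt hb0
  have hn1 : (1:ℝ) ≤ (n:ℝ) - 1 := by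
    have : (2:ℝ) ≤ n := by exact_mod_cast hn
    linarith
  have hn1ne : (n:ℝ) - 1 ≠ 0 := by linarith
  have hKnat : 0 < n.choose b := Nat.choose_pos hbn
  have hK : (0:ℝ) < (n.choose b : ℝ) := by exact_mod_cast hKnat
  have hβ0 : 0 ≤ β := by
    rw [hβ]
    apply div_nonneg
    · have : (b:ℝ) ≤ n := by exact_mod_cast hbn
      linarith
    · positivity
  have hβ1 : β ≤ 1 := by
    rw [hβ]
    rw [div_le_one (by positivity)]
    have hbn' : (b:ℝ) ≤ n := by exact_mod_cast hbn
    have hb1' : (1:ℝ) ≤ (b:ℝ) := by exact_mod_cast hb1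
    nlinarith [mul_nonneg (le_of_lt hn0) (sub_nonneg.2 hb1')]
  have hNnn : 0 ≤ N := by
    rw [hN]
    apply mul_nonneg (by positivity)
    apply Finset.sum_nonneg
    intro i _
    positivity
  rcases Nat.eq_zero_or_pos d with hd0 | hdpos
  · -- trivial case: the space is a single point
    subst hd0
    have hsub : ∀ x y : EuclideanSpace ℝ (Fin 0), x = y := by
      intro x y
      ext i
      exact absurd i.2 (by omega)
    have hFx : ∀ x : EuclideanSpace ℝ (Fin 0), F x = F wstar := fun x => by rw [hsub x wstar]
    have hNz : N = 0 := by
      rw [hN]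
      have : ∀ i : Fin n, ‖gradient (f i) wstar‖ ^ 2 = 0 := by
        intro i
        rw [hsub (gradient (f i) wstar) 0, norm_zero]
        norm_num
      rw [Finset.sum_congr rfl (fun i _ => this i)]
      simp
    have hsum : (∑ S ∈ Finset.powersetCard b (Finset.univ : Finset (Fin n)),
        F (w - α • Matrix.toEuclideanLin H ((b : ℝ)⁻¹ • ∑ i ∈ S, gradient (f i) w)))
        = (n.choose b : ℝ) * F wstar := by
      rw [Finset.sum_congr rfl (fun S _ => hFx _), Finset.sum_const, nsmul_eq_mul]
      congr 1
      rw [Finset.card_powersetCard, Finset.card_univ, Fintype.card_fin]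
    rw [hsum, hNz, hFx w]
    field_simp
    simp
  · -- main case
    have hd1 : 1 ≤ d := hdpos
    -- Λ is positive
    have hΛ0 : 0 ≤ Λ := by
      set e : EuclideanSpace ℝ (Fin d) := EuclideanSpace.single ⟨0, hd1⟩ (1:ℝ) with he
      have hne : ‖e - 0‖ = 1 := by
        rw [sub_zero, he, EuclideanSpace.norm_single, norm_one]
      have := hsmooth ⟨0, by omega⟩ 0 e
      rw [hne, mul_one] at this
      exact le_trans (norm_nonneg _) this
    have hΛpos : 0 < Λ := by
      rcases lt_or_eq_of_le hΛ0 with h | h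
      · exact h
      · exfalso
        rw [← h] at hα1
        simp at hα1
        linarith
    have hμ2pos : 0 < μ₂ := lt_of_lt_of_le hμ hμμ
    have hdenpos : 0 < μ₂ ^ 2 * (lam + Λ * β) * Λ := by
      have : 0 < lam + Λ * β := by nlinarith
      positivity
    have hαkey : α * (μ₂ ^ 2 * (lam + Λ * β) * Λ) < lam * μ₁ :=
      (lt_div_iff₀ hdenpos).1 hα1
    -- gradient structure of F
    have hFgrad : ∀ x, HasGradientAt F ((n:ℝ)⁻¹ • ∑ i, gradient (f i) x) x := by
      intro x
      have hFeq : F = fun w => (n:ℝ)⁻¹ * ∑ i, f i w := funext hF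
      rw [hFeq]
      exact aux_grad_avg f hdiff _ x
    have hgrF : ∀ x, gradient F x = (n:ℝ)⁻¹ • ∑ i, gradient (f i) x :=
      fun x => (hFgrad x).gradient
    have hFdiff : Differentiable ℝ F := fun x => (hFgrad x).differentiableAt
    have hFsmooth : ∀ x y : EuclideanSpace ℝ (Fin d),
        ‖gradient F y - gradient F x‖ ≤ Λ * ‖y - x‖ := by
      intro x y
      rw [hgrF, hgrF, ← smul_sub, ← Finset.sum_sub_distrib, norm_smul]
      have h1 : ‖∑ i, (gradient (f i) y - gradient (f i) x)‖
          ≤ ∑ i, ‖gradient (f i) y - gradient (f i) x‖ := norm_sum_le _ _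
      have h2 : ∑ i, ‖gradient (f i) y - gradient (f i) x‖ ≤ ∑ _i : Fin n, Λ * ‖y - x‖ := by
        apply Finset.sum_le_sum
        intro i _
        exact hsmooth i x y
      have h3 : ∑ _i : Fin n, Λ * ‖y - x‖ = n * (Λ * ‖y - x‖) := by
        rw [Finset.sum_const, Finset.card_univ, Fintype.card_fin, nsmul_eq_mul]
      have h4 : ‖(n:ℝ)⁻¹‖ = (n:ℝ)⁻¹ := by
        rw [Real.norm_eq_abs, abs_of_pos (by positivity)]
      rw [h4]
      calc (n:ℝ)⁻¹ * ‖∑ i, (gradient (f i) y - gradient (f i) x)‖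
          ≤ (n:ℝ)⁻¹ * (n * (Λ * ‖y - x‖)) := by
            apply mul_le_mul_of_nonneg_left _ (by positivity)
            rw [← h3]
            exact le_trans h1 h2
        _ = Λ * ‖y - x‖ := by field_simp
    -- gradient at the minimizer is zero
    have hgradstar : ((n:ℝ)⁻¹ • ∑ i, gradient (f i) wstar) = 0 := by
      have hlocmin : IsLocalMin F wstar := Filter.Eventually.of_forall hmin
      have h1 := hlocmin.hasFDerivAt_eq_zero (hasGradientAt_iff_hasFDerivAt.1 (hFgrad wstar))
      have h2 := congrArg (InnerProductSpace.toDual ℝ (EuclideanSpace ℝ (Fin d))).symm h1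
      simpa [gradient] using h2
    have husum : ∑ i, gradient (f i) wstar = 0 := by
      rcases smul_eq_zero.1 hgradstar with h | h
      · exact absurd h (by positivity)
      · exact h
    -- PL inequality
    have hPL : 2 * lam * (F w - F wstar) ≤ ‖gradient F w‖ ^ 2 := by
      have h1 := hsc w wstar
      have h2 : -(‖gradient F w‖ * ‖wstar - w‖) ≤ ⟪gradient F w, wstar - w⟫ := by
        have ha := abs_real_inner_le_norm (gradient F w) (wstar - w)
        have := neg_abs_le ⟪gradient F w, wstar - w⟫
        linarith
      have key : F w - F wstar ≤ ‖gradient F w‖ * ‖wstar - w‖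
          - lam / 2 * ‖wstar - w‖ ^ 2 := by linarith [h1, h2]
      nlinarith [mul_le_mul_of_nonneg_left key (by positivity : (0:ℝ) ≤ 2 * lam),
        sq_nonneg (‖gradient F w‖ - lam * ‖wstar - w‖)]
    have hD0 : 0 ≤ F w - F wstar := by linarith [hmin w]
    -- cocoercivity summed
    have hco : ∀ i : Fin n, ‖gradient (f i) w - gradient (f i) wstar‖ ^ 2
        ≤ 2 * Λ * (f i w - f i wstar - ⟪gradient (f i) wstar, w - wstar⟫) :=
      fun i => aux_cocoercivity (hconv i) (hdiff i) hΛpos (fun x y => hsmooth i x y) wstar w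
    have hsumco : ∑ i, ‖gradient (f i) w - gradient (f i) wstar‖ ^ 2
        ≤ 2 * Λ * ((n:ℝ) * (F w - F wstar)) := by
      calc ∑ i, ‖gradient (f i) w - gradient (f i) wstar‖ ^ 2
          ≤ ∑ i, 2 * Λ * (f i w - f i wstar - ⟪gradient (f i) wstar, w - wstar⟫) :=
            Finset.sum_le_sum (fun i _ => hco i)
        _ = 2 * Λ * ((∑ i, f i w) - (∑ i, f i wstar)
              - ⟪∑ i, gradient (f i) wstar, w - wstar⟫) := by
            rw [← Finset.mul_sum, sum_inner]
            congr 1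
            rw [Finset.sum_sub_distrib, Finset.sum_sub_distrib]
        _ = 2 * Λ * ((n:ℝ) * (F w - F wstar)) := by
            rw [husum, inner_zero_left, hF w, hF wstar]
            field_simp
            ring
    have hPsum : ∑ i, ‖gradient (f i) w‖ ^ 2
        ≤ 2 * (∑ i, ‖gradient (f i) w - gradient (f i) wstar‖ ^ 2)
          + 2 * (∑ i, ‖gradient (f i) wstar‖ ^ 2) := by
      rw [Finset.mul_sum, Finset.mul_sum, ← Finset.sum_add_distrib]
      apply Finset.sum_le_sum
      intro i _
      have h1 : ‖gradient (f i) w‖ ≤ ‖gradient (f i) w - gradient (f i) wstar‖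
          + ‖gradient (f i) wstar‖ := by
        have := norm_add_le (gradient (f i) w - gradient (f i) wstar) (gradient (f i) wstar)
        rw [sub_add_cancel] at this
        exact this
      nlinarith [sq_nonneg (‖gradient (f i) w - gradient (f i) wstar‖
        - ‖gradient (f i) wstar‖), norm_nonneg (gradient (f i) w)]
    have hustar : ∑ i, ‖gradient (f i) wstar‖ ^ 2 = (n:ℝ) * N / 2 := by
      rw [hN]; field_simp
    have hPfull : ∑ i, ‖gradient (f i) w‖ ^ 2
        ≤ (n:ℝ) * (4 * Λ * (F w - F wstar) + N) := by
      calc ∑ i, ‖gradient (f i) w‖ ^ 2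
          ≤ 2 * (2 * Λ * ((n:ℝ) * (F w - F wstar))) + 2 * ((n:ℝ) * N / 2) := by
            rw [← hustar]
            have := hPsum
            nlinarith [hsumco]
        _ = (n:ℝ) * (4 * Λ * (F w - F wstar) + N) := by ring
    have hP' : (n:ℝ)⁻¹ * ∑ i, ‖gradient (f i) w‖ ^ 2
        ≤ 4 * Λ * (F w - F wstar) + N := by
      rw [inv_mul_le_iff₀ hn0]
      exact hPfull
    -- combinatorial counts
    have hc1cnt : ∀ i : Fin n, ((powersetCard b (univ : Finset (Fin n))).filter
        (fun S => i ∈ S ∧ i ∈ S)).card = (n - 1).choose (b - 1) := by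
      intro i
      rw [← aux_cnt_single hb1 i]
      congr 1
      apply Finset.filter_congr
      intro S _
      simp
    have hc1real : ((n - 1).choose (b - 1) : ℝ) * n = (n.choose b : ℝ) * b := by
      have h0 := aux_nat_c1 n b (by omega) hb1
      have h2 : ((n * (n - 1).choose (b - 1) : ℕ) : ℝ) = ((n.choose b * b : ℕ) : ℝ) := by
        exact_mod_cast congrArg (fun k : ℕ => (k : ℝ)) h0
      push_cast at h2
      linarith
    obtain ⟨c2, hc2cnt, hc2real⟩ : ∃ c2 : ℕ,
        (∀ i j : Fin n, i ≠ j → ((powersetCard b (univ : Finset (Fin n))).filter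
          (fun S => i ∈ S ∧ j ∈ S)).card = c2)
        ∧ ((c2 : ℝ) * ((n:ℝ) * ((n:ℝ) - 1)) = (n.choose b : ℝ) * b * ((b:ℝ) - 1)) := by
      rcases eq_or_lt_of_le hb1 with hb | hb2
      · refine ⟨0, ?_, ?_⟩
        · intro i j hij
          rw [← hb]
          exact aux_cnt_pair_one hij
        · rw [← hb]
          norm_num
      · have hb2' : 2 ≤ b := hb2
        refine ⟨(n - 2).choose (b - 2), fun i j hij => aux_cnt_pair hb2' hij, ?_⟩
        have e1 := aux_nat_c1 (n - 1) (b - 1) (by omega) (by omega)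
        have e2 := aux_nat_c1 n b (by omega) hb1
        rw [show n - 1 - 1 = n - 2 by omega, show b - 1 - 1 = b - 2 by omega] at e1
        have enat : n * ((n - 1) * ((n - 2).choose (b - 2)))
            = n.choose b * b * (b - 1) := by
          rw [e1, ← mul_assoc, e2]
        have ecast : (n:ℝ) * (((n:ℝ) - 1) * ((n - 2).choose (b - 2) : ℝ))
            = (n.choose b : ℝ) * b * ((b:ℝ) - 1) := by
          have h1 : ((n - 1 : ℕ) : ℝ) = (n:ℝ) - 1 := by
            push_cast [Nat.cast_sub (by omega : 1 ≤ n)]; ring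
          have h2 : ((b - 1 : ℕ) : ℝ) = (b:ℝ) - 1 := by
            push_cast [Nat.cast_sub hb1]; ring
          calc (n:ℝ) * (((n:ℝ) - 1) * ((n - 2).choose (b - 2) : ℝ))
              = ((n * ((n - 1) * ((n - 2).choose (b - 2))) : ℕ) : ℝ) := by
                push_cast [h1]; ring
            _ = ((n.choose b * b * (b - 1) : ℕ) : ℝ) := by rw [enat]
            _ = (n.choose b : ℝ) * b * ((b:ℝ) - 1) := by push_cast [h2]; ring
        linarith [ecast]
    -- sums of gradients
    have hm : gradient F w = (n:ℝ)⁻¹ • ∑ i, gradient (f i) w := hgrF w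
    have hsumv : ∑ i, gradient (f i) w = (n:ℝ) • gradient F w := by
      rw [hm, smul_smul, mul_inv_cancel₀ hnne, one_smul]
    have hnormsumv : ‖∑ i, gradient (f i) w‖ ^ 2 = (n:ℝ) ^ 2 * ‖gradient F w‖ ^ 2 := by
      rw [hsumv, norm_smul, Real.norm_eq_abs, abs_of_pos hn0, mul_pow]
    have hsum1 : ∑ S ∈ powersetCard b (univ : Finset (Fin n)), ∑ i ∈ S, gradient (f i) w
        = (((n - 1).choose (b - 1) : ℕ) : ℝ) • ∑ i, gradient (f i) w := by
      rw [aux_swap_sum]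
      rw [Finset.sum_congr rfl (fun i (_ : i ∈ Finset.univ) => by
        rw [aux_cnt_single hb1 i])]
      rw [← Finset.smul_sum, Nat.cast_smul_eq_nsmul]
    -- expectation of the search direction
    have hT1 : ∑ S ∈ powersetCard b (univ : Finset (Fin n)),
          ⟪gradient F w, Matrix.toEuclideanLin H ((b : ℝ)⁻¹ • ∑ i ∈ S, gradient (f i) w)⟫
        = (n.choose b : ℝ) * ⟪gradient F w,
            Matrix.toEuclideanLin H (gradient F w)⟫ := by
      rw [← inner_sum, ← map_sum, ← Finset.smul_sum, hsum1, hsumv, smul_smul, smul_smul,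
        map_smul, real_inner_smul_right]
      congr 1
      have : (b:ℝ)⁻¹ * (((n - 1).choose (b - 1) : ℕ) : ℝ) * (n:ℝ)
          = (b:ℝ)⁻¹ * ((((n - 1).choose (b - 1) : ℕ) : ℝ) * (n:ℝ)) := by ring
      rw [this, hc1real]
      field_simp
    -- second moment bound
    have hqnorm : ∀ S : Finset (Fin n), ‖(b : ℝ)⁻¹ • ∑ i ∈ S, gradient (f i) w‖ ^ 2
        = (b:ℝ)⁻¹ ^ 2 * ‖∑ i ∈ S, gradient (f i) w‖ ^ 2 := by
      intro S
      rw [norm_smul, Real.norm_eq_abs, abs_of_pos (by positivity), mul_pow]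
    have hT2 : ∑ S ∈ powersetCard b (univ : Finset (Fin n)),
          ‖Matrix.toEuclideanLin H ((b : ℝ)⁻¹ • ∑ i ∈ S, gradient (f i) w)‖ ^ 2
        ≤ μ₂ ^ 2 * ((b:ℝ)⁻¹ ^ 2 * ((((n - 1).choose (b - 1) : ℕ) : ℝ)
              * (∑ i, ‖gradient (f i) w‖ ^ 2)
            + (c2 : ℝ) * ((n:ℝ) ^ 2 * ‖gradient F w‖ ^ 2
              - ∑ i, ‖gradient (f i) w‖ ^ 2))) := by
      have step1 : ∑ S ∈ powersetCard b (univ : Finset (Fin n)),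
            ‖Matrix.toEuclideanLin H ((b : ℝ)⁻¹ • ∑ i ∈ S, gradient (f i) w)‖ ^ 2
          ≤ ∑ S ∈ powersetCard b (univ : Finset (Fin n)),
            μ₂ ^ 2 * ‖(b : ℝ)⁻¹ • ∑ i ∈ S, gradient (f i) w‖ ^ 2 := by
        apply Finset.sum_le_sum
        intro S _
        have h := aux_opnorm_bound H hsym μ₁ μ₂ hμ hμμ hlow hup
          ((b : ℝ)⁻¹ • ∑ i ∈ S, gradient (f i) w)
        calc ‖Matrix.toEuclideanLin H ((b : ℝ)⁻¹ • ∑ i ∈ S, gradient (f i) w)‖ ^ 2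
            ≤ (μ₂ * ‖(b : ℝ)⁻¹ • ∑ i ∈ S, gradient (f i) w‖) ^ 2 :=
              pow_le_pow_left₀ (norm_nonneg _) h 2
          _ = μ₂ ^ 2 * ‖(b : ℝ)⁻¹ • ∑ i ∈ S, gradient (f i) w‖ ^ 2 := by ring
      have step2 : ∑ S ∈ powersetCard b (univ : Finset (Fin n)),
            μ₂ ^ 2 * ‖(b : ℝ)⁻¹ • ∑ i ∈ S, gradient (f i) w‖ ^ 2
          = μ₂ ^ 2 * ((b:ℝ)⁻¹ ^ 2
            * ∑ S ∈ powersetCard b (univ : Finset (Fin n)), ‖∑ i ∈ S, gradient (f i) w‖ ^ 2) := by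
        rw [← Finset.mul_sum]
        congr 1
        rw [Finset.sum_congr rfl (fun S (_ : S ∈ powersetCard b (univ : Finset (Fin n))) =>
          hqnorm S), ← Finset.mul_sum]
      have step3 := aux_sum_sq_split (fun i => gradient (f i) w)
        ((n - 1).choose (b - 1)) c2 hc1cnt hc2cnt
      rw [step2] at step1
      rw [step3, hnormsumv] at step1
      exact step1
    -- descent lemma applied to each subset
    have hdesc : ∀ S ∈ powersetCard b (univ : Finset (Fin n)),
        F (w - α • Matrix.toEuclideanLin H ((b : ℝ)⁻¹ • ∑ i ∈ S, gradient (f i) w))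
        ≤ F w - α * ⟪gradient F w,
            Matrix.toEuclideanLin H ((b : ℝ)⁻¹ • ∑ i ∈ S, gradient (f i) w)⟫
          + Λ / 2 * (α ^ 2
            * ‖Matrix.toEuclideanLin H ((b : ℝ)⁻¹ • ∑ i ∈ S, gradient (f i) w)‖ ^ 2) := by
      intro S _
      have h := aux_descent_lemma hFdiff hFsmooth w
        (w - α • Matrix.toEuclideanLin H ((b : ℝ)⁻¹ • ∑ i ∈ S, gradient (f i) w))
      have he : (w - α • Matrix.toEuclideanLin H ((b : ℝ)⁻¹ • ∑ i ∈ S, gradient (f i) w)) - w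
          = -(α • Matrix.toEuclideanLin H ((b : ℝ)⁻¹ • ∑ i ∈ S, gradient (f i) w)) := by
        abel
      rw [he, inner_neg_right, real_inner_smul_right, norm_neg, norm_smul,
        Real.norm_eq_abs, abs_of_pos hα0, mul_pow] at h
      linarith [h]
    -- sum up
    have hstep : ∑ S ∈ powersetCard b (univ : Finset (Fin n)),
          F (w - α • Matrix.toEuclideanLin H ((b : ℝ)⁻¹ • ∑ i ∈ S, gradient (f i) w))
        ≤ ∑ S ∈ powersetCard b (univ : Finset (Fin n)),
          (F w - α * ⟪gradient F w,
              Matrix.toEuclideanLin H ((b : ℝ)⁻¹ • ∑ i ∈ S, gradient (f i) w)⟫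
            + Λ / 2 * (α ^ 2
              * ‖Matrix.toEuclideanLin H ((b : ℝ)⁻¹ • ∑ i ∈ S, gradient (f i) w)‖ ^ 2)) :=
      Finset.sum_le_sum hdesc
    have hsplit : ∑ S ∈ powersetCard b (univ : Finset (Fin n)),
          (F w - α * ⟪gradient F w,
              Matrix.toEuclideanLin H ((b : ℝ)⁻¹ • ∑ i ∈ S, gradient (f i) w)⟫
            + Λ / 2 * (α ^ 2
              * ‖Matrix.toEuclideanLin H ((b : ℝ)⁻¹ • ∑ i ∈ S, gradient (f i) w)‖ ^ 2))
        = (n.choose b : ℝ) * F w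
          - α * ((n.choose b : ℝ) * ⟪gradient F w, Matrix.toEuclideanLin H (gradient F w)⟫)
          + Λ / 2 * α ^ 2 * ∑ S ∈ powersetCard b (univ : Finset (Fin n)),
              ‖Matrix.toEuclideanLin H ((b : ℝ)⁻¹ • ∑ i ∈ S, gradient (f i) w)‖ ^ 2 := by
      rw [Finset.sum_add_distrib, Finset.sum_sub_distrib, Finset.sum_const,
        Finset.card_powersetCard, Finset.card_univ, Fintype.card_fin, nsmul_eq_mul,
        ← Finset.mul_sum, hT1]
      congr 1
      rw [← Finset.mul_sum, ← Finset.mul_sum]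
      ring
    -- the coefficient identity
    have hcoeff : Λ / 2 * α ^ 2 * (μ₂ ^ 2 * ((b:ℝ)⁻¹ ^ 2
            * ((((n - 1).choose (b - 1) : ℕ) : ℝ) * (∑ i, ‖gradient (f i) w‖ ^ 2)
              + (c2 : ℝ) * ((n:ℝ) ^ 2 * ‖gradient F w‖ ^ 2
                - ∑ i, ‖gradient (f i) w‖ ^ 2))))
        = (n.choose b : ℝ) * ((Λ * α ^ 2 * μ₂ ^ 2 / 2)
            * (β * ((n:ℝ)⁻¹ * ∑ i, ‖gradient (f i) w‖ ^ 2)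
              + (1 - β) * ‖gradient F w‖ ^ 2)) := by
      have hc1v : (((n - 1).choose (b - 1) : ℕ) : ℝ) = (n.choose b : ℝ) * b / n := by
        field_simp
        linarith [hc1real]
      have hc2v : (c2 : ℝ) = (n.choose b : ℝ) * b * ((b:ℝ) - 1) / ((n:ℝ) * ((n:ℝ) - 1)) := by
        rw [eq_div_iff (by positivity)]
        · linarith [hc2real]
      rw [hc1v, hc2v, hβ]
      field_simp
      ring
    -- combine everything
    have hchain : ∑ S ∈ powersetCard b (univ : Finset (Fin n)),
          F (w - α • Matrix.toEuclideanLin H ((b : ℝ)⁻¹ • ∑ i ∈ S, gradient (f i) w))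
        ≤ (n.choose b : ℝ) * (F w
            - α * ⟪gradient F w, Matrix.toEuclideanLin H (gradient F w)⟫
            + (Λ * α ^ 2 * μ₂ ^ 2 / 2)
              * (β * ((n:ℝ)⁻¹ * ∑ i, ‖gradient (f i) w‖ ^ 2)
                + (1 - β) * ‖gradient F w‖ ^ 2)) := by
      have hTT : Λ / 2 * α ^ 2 * (∑ S ∈ powersetCard b (univ : Finset (Fin n)),
            ‖Matrix.toEuclideanLin H ((b : ℝ)⁻¹ • ∑ i ∈ S, gradient (f i) w)‖ ^ 2)
          ≤ Λ / 2 * α ^ 2 * (μ₂ ^ 2 * ((b:ℝ)⁻¹ ^ 2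
            * ((((n - 1).choose (b - 1) : ℕ) : ℝ) * (∑ i, ‖gradient (f i) w‖ ^ 2)
              + (c2 : ℝ) * ((n:ℝ) ^ 2 * ‖gradient F w‖ ^ 2
                - ∑ i, ‖gradient (f i) w‖ ^ 2)))) := by
        apply mul_le_mul_of_nonneg_left hT2 (by positivity)
      rw [hcoeff] at hTT
      rw [hsplit] at hstep
      calc ∑ S ∈ powersetCard b (univ : Finset (Fin n)),
            F (w - α • Matrix.toEuclideanLin H ((b : ℝ)⁻¹ • ∑ i ∈ S, gradient (f i) w))
          ≤ (n.choose b : ℝ) * F w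
            - α * ((n.choose b : ℝ) * ⟪gradient F w, Matrix.toEuclideanLin H (gradient F w)⟫)
            + (n.choose b : ℝ) * ((Λ * α ^ 2 * μ₂ ^ 2 / 2)
              * (β * ((n:ℝ)⁻¹ * ∑ i, ‖gradient (f i) w‖ ^ 2)
                + (1 - β) * ‖gradient F w‖ ^ 2)) := by linarith [hstep, hTT]
        _ = (n.choose b : ℝ) * (F w
            - α * ⟪gradient F w, Matrix.toEuclideanLin H (gradient F w)⟫
            + (Λ * α ^ 2 * μ₂ ^ 2 / 2)
              * (β * ((n:ℝ)⁻¹ * ∑ i, ‖gradient (f i) w‖ ^ 2)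
                + (1 - β) * ‖gradient F w‖ ^ 2)) := by ring
    have hEE : (∑ S ∈ Finset.powersetCard b (Finset.univ : Finset (Fin n)),
          F (w - α • Matrix.toEuclideanLin H ((b : ℝ)⁻¹ • ∑ i ∈ S, gradient (f i) w)))
          / (n.choose b : ℝ) - F wstar
        ≤ (F w - F wstar)
          - α * ⟪gradient F w, Matrix.toEuclideanLin H (gradient F w)⟫
          + (Λ * α ^ 2 * μ₂ ^ 2 / 2)
            * (β * ((n:ℝ)⁻¹ * ∑ i, ‖gradient (f i) w‖ ^ 2)
              + (1 - β) * ‖gradient F w‖ ^ 2) := by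
      have h1 : (∑ S ∈ Finset.powersetCard b (Finset.univ : Finset (Fin n)),
            F (w - α • Matrix.toEuclideanLin H ((b : ℝ)⁻¹ • ∑ i ∈ S, gradient (f i) w)))
            / (n.choose b : ℝ)
          ≤ F w - α * ⟪gradient F w, Matrix.toEuclideanLin H (gradient F w)⟫
            + (Λ * α ^ 2 * μ₂ ^ 2 / 2)
              * (β * ((n:ℝ)⁻¹ * ∑ i, ‖gradient (f i) w‖ ^ 2)
                + (1 - β) * ‖gradient F w‖ ^ 2) := by
        rw [div_le_iff₀ hK]
        exact hchain.trans_eq (mul_comm _ _)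
      linarith [h1]
    have hQb := aux_quad_lower H μ₁ hlow (gradient F w)
    exact aux_final_arith (F w - F wstar) N (‖gradient F w‖ ^ 2)
      (⟪gradient F w, Matrix.toEuclideanLin H (gradient F w)⟫)
      ((n:ℝ)⁻¹ * ∑ i, ‖gradient (f i) w‖ ^ 2) lam Λ μ₁ μ₂ β α _
      hEE hQb hPL hP' hD0 hNnn hβ0 hβ1 hlam hΛpos hμ hμ2pos hα0 hαkey
end
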